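/- arXiv:math/0310297 — 4 statements merged into one kernel-verified Lean document; each statement's English description precedes it below -/
import Mathlib

section
/- Let q ∈ (0,1) and define β : ℕ → ℝ by β_0 = 1 and, for k ≥ 1, β_k = (1/k) Σ_{ℓ=1}^k (−1)^{ℓ+1} (q^ℓ/(1−q^ℓ)) β_{k−ℓ}. Then for every real s, the series Σ_{k=0}^∞ β_k s^k converges and equals the convergent infinite product ∏_{k=1}^∞ (1 + q^k s). -/
open Filter

namespace GFProd

variable {q : ℝ}

/-- `c q k = ∏_{j=1}^k q^j/(1-q^j)`, the Taylor coefficients of `∏ (1+q^j s)`. -/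
noncomputable def c (q : ℝ) (k : ℕ) : ℝ := ∏ j ∈ Finset.Icc 1 k, (q ^ j / (1 - q ^ j))

lemma one_sub_pow_pos (hq0 : 0 < q) (hq1 : q < 1) (j : ℕ) (hj : 1 ≤ j) : 0 < 1 - q ^ j := by
  have : q ^ j < 1 := pow_lt_one₀ hq0.le hq1 (by omega)
  linarith

lemma c_zero : c q 0 = 1 := by simp [c]

lemma c_succ (k : ℕ) : c q (k + 1) = c q k * (q ^ (k+1) / (1 - q ^ (k+1))) := by
  rw [c, c, Finset.prod_Icc_succ_top (by omega)]

lemma c_pos (hq0 : 0 < q) (hq1 : q < 1) (k : ℕ) : 0 < c q k := by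
  induction k with
  | zero => simpa [c_zero] using (zero_lt_one (α := ℝ))
  | succ n ih =>
    rw [c_succ]
    exact mul_pos ih (div_pos (pow_pos hq0 _) (one_sub_pow_pos hq0 hq1 _ (by omega)))

lemma pf (hq0 : 0 < q) (hq1 : q < 1) (l m : ℕ) (hl : 1 ≤ l) (hm : 1 ≤ m) :
    (q^l/(1-q^l)) * (q^m/(1-q^m))
      = (q^(l+m)/(1-q^(l+m))) * ((q^l/(1-q^l)) + (q^m/(1-q^m)) + 1) := by
  have h1 := (one_sub_pow_pos hq0 hq1 l hl).ne'
  have h2 := (one_sub_pow_pos hq0 hq1 m hm).ne'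
  have h3 := (one_sub_pow_pos hq0 hq1 (l+m) (by omega)).ne'
  have e : q^(l+m) = q^l * q^m := pow_add q l m
  rw [e] at h3 ⊢
  field_simp
  ring

/-- alternating partial sums -/
noncomputable def T (q : ℝ) (k : ℕ) : ℝ := ∑ i ∈ Finset.range k, (-1 : ℝ)^i * c q (k - 1 - i)

lemma T_succ (k : ℕ) : T q (k+1) = c q k - T q k := by
  rw [T, Finset.sum_range_succ']
  have h1 : ∀ i, (-1:ℝ)^(i+1) * c q (k + 1 - 1 - (i+1)) = -((-1:ℝ)^i * c q (k - 1 - i)) := by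
    intro i
    have e : k + 1 - 1 - (i+1) = k - 1 - i := by omega
    rw [e, pow_succ]
    ring
  rw [Finset.sum_congr rfl (fun i _ => h1 i)]
  simp [T, Finset.sum_neg_distrib]
  ring

lemma U_eq (hq0 : 0 < q) (hq1 : q < 1) :
    ∀ k : ℕ, ∑ i ∈ Finset.range (k+1), (-1:ℝ)^i * (q^(i+1)/(1-q^(i+1))) * c q (k - i)
      = (k+1) * c q (k+1) := by
  intro k
  induction k with
  | zero => simp [c_succ, c]
  | succ k ih =>
    rw [Finset.sum_range_succ]
    set a : ℝ := q^(k+2)/(1-q^(k+2)) with ha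
    have hterm : ∀ i ∈ Finset.range (k+1),
        (-1:ℝ)^i * (q^(i+1)/(1-q^(i+1))) * c q (k + 1 - i)
        = a * ((-1:ℝ)^i * (q^(i+1)/(1-q^(i+1))) * c q (k - i))
        + (a * ((-1:ℝ)^i * c q (k + 1 - i))
        + a * ((-1:ℝ)^i * c q (k - i))) := by
      intro i hi
      have hik : i ≤ k := by simpa [Nat.lt_succ_iff] using hi
      have h1 : k + 1 - i = (k - i) + 1 := by omega
      have h2 : (i+1) + (k - i + 1) = k + 2 := by omega
      have hp := pf hq0 hq1 (i+1) (k - i + 1) (by omega) (by omega)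
      rw [h2] at hp
      rw [h1, c_succ (k - i)]
      rw [← ha] at hp
      linear_combination ((-1:ℝ)^i * c q (k-i)) * hp
    rw [Finset.sum_congr rfl hterm, Finset.sum_add_distrib, Finset.sum_add_distrib,
      ← Finset.mul_sum, ← Finset.mul_sum, ← Finset.mul_sum, ih]
    have hS3 : ∑ i ∈ Finset.range (k+1), (-1:ℝ)^i * c q (k - i) = T q (k+1) := by
      rw [T]
      refine Finset.sum_congr rfl fun i _ => ?_
      have e : k + 1 - 1 - i = k - i := by omega
      rw [e]
    have hS2 : ∑ i ∈ Finset.range (k+1), (-1:ℝ)^i * c q (k + 1 - i)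
        = T q (k+2) - (-1:ℝ)^(k+1) := by
      have h3 : T q (k+2) = ∑ i ∈ Finset.range (k+2), (-1:ℝ)^i * c q (k + 1 - i) := by
        rw [T]
        refine Finset.sum_congr rfl fun i _ => ?_
        have e : k + 2 - 1 - i = k + 1 - i := by omega
        rw [e]
      have h4 : ∑ i ∈ Finset.range (k+2), (-1:ℝ)^i * c q (k+1-i)
          = (∑ i ∈ Finset.range (k+1), (-1:ℝ)^i * c q (k+1-i)) + (-1:ℝ)^(k+1) := by
        rw [Finset.sum_range_succ]
        simp [c]
      rw [h3, h4]
      ring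
    rw [hS2, hS3, T_succ (k+1)]
    have hc0 : c q (k + 1 - (k+1)) = 1 := by simp [c]
    rw [hc0, c_succ (k+1), ← ha]
    push_cast
    ring

lemma beta_eq (hq0 : 0 < q) (hq1 : q < 1) (β : ℕ → ℝ) (hβ0 : β 0 = 1)
    (hβ : ∀ k : ℕ, 1 ≤ k → β k = (1 / (k:ℝ)) *
      ∑ ℓ ∈ Finset.Icc 1 k, (-1:ℝ)^(ℓ+1) * (q^ℓ/(1-q^ℓ)) * β (k-ℓ)) :
    ∀ k, β k = c q k := by
  intro k
  induction k using Nat.strong_induction_on with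
  | _ k ih =>
    match k with
    | 0 => rw [hβ0, c_zero]
    | (k+1) =>
      rw [hβ (k+1) (by omega)]
      have h1 : ∑ ℓ ∈ Finset.Icc 1 (k+1), (-1:ℝ)^(ℓ+1) * (q^ℓ/(1-q^ℓ)) * β (k+1-ℓ)
          = ∑ ℓ ∈ Finset.Icc 1 (k+1), (-1:ℝ)^(ℓ+1) * (q^ℓ/(1-q^ℓ)) * c q (k+1-ℓ) := by
        refine Finset.sum_congr rfl fun ℓ hℓ => ?_
        rw [Finset.mem_Icc] at hℓ
        rw [ih (k+1-ℓ) (by omega)]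
      rw [h1]
      have h2 : ∑ ℓ ∈ Finset.Icc 1 (k+1), (-1:ℝ)^(ℓ+1) * (q^ℓ/(1-q^ℓ)) * c q (k+1-ℓ)
          = ∑ i ∈ Finset.range (k+1), (-1:ℝ)^i * (q^(i+1)/(1-q^(i+1))) * c q (k-i) := by
        rw [← Finset.Ico_add_one_right_eq_Icc, Finset.sum_Ico_eq_sum_range]
        refine Finset.sum_congr rfl fun i hi => ?_
        have e1 : 1 + i = i + 1 := by omega
        rw [e1]
        have e2 : k + 1 - (i+1) = k - i := by omega
        rw [e2, pow_succ, pow_succ]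
        ring
      rw [h2, U_eq hq0 hq1 k]
      have hne : ((k:ℝ)+1) ≠ 0 := by positivity
      push_cast
      field_simp

lemma summable_c (hq0 : 0 < q) (hq1 : q < 1) (t : ℝ) :
    Summable (fun k : ℕ => c q k * t ^ k) := by
  apply summable_of_ratio_norm_eventually_le (r := 1/2) (by norm_num)
  have h1 : Tendsto (fun n : ℕ => q^(n+1)) atTop (nhds 0) :=
    (tendsto_pow_atTop_nhds_zero_of_lt_one hq0.le hq1).comp (tendsto_add_atTop_nat 1)
  have h2 : Tendsto (fun n : ℕ => 1 - q^(n+1)) atTop (nhds 1) := by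
    simpa using tendsto_const_nhds.sub h1
  have h0 : Tendsto (fun n : ℕ => (q^(n+1)/(1-q^(n+1))) * |t|) atTop (nhds 0) := by
    simpa using (h1.div h2 (by norm_num)).mul_const |t|
  filter_upwards [h0.eventually_lt_const (by norm_num : (0:ℝ) < 1/2)] with n hn
  have ha : 0 ≤ q^(n+1)/(1-q^(n+1)) :=
    div_nonneg (pow_nonneg hq0.le _) (one_sub_pow_pos hq0 hq1 (n+1) (by omega)).le
  have e : c q (n+1) * t^(n+1) = (q^(n+1)/(1-q^(n+1)) * t) * (c q n * t^n) := by
    rw [c_succ, pow_succ]; ring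
  rw [e, Real.norm_eq_abs, Real.norm_eq_abs, abs_mul, abs_mul, abs_of_nonneg ha]
  exact mul_le_mul_of_nonneg_right hn.le (abs_nonneg _)

lemma F_funeq (hq0 : 0 < q) (hq1 : q < 1) (t : ℝ) :
    ∑' k : ℕ, c q k * t^k = (1 + q*t) * ∑' k : ℕ, c q k * (q*t)^k := by
  have S1 : Summable (fun k : ℕ => c q k * t^k) := summable_c hq0 hq1 t
  have S2 : Summable (fun k : ℕ => c q k * (q*t)^k) := summable_c hq0 hq1 (q*t)
  have key : ∀ k : ℕ, c q (k+1) * (1 - q^(k+1)) = q^(k+1) * c q k := by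
    intro k
    have h := (one_sub_pow_pos hq0 hq1 (k+1) (by omega)).ne'
    rw [c_succ]
    field_simp
  have Sd : Summable (fun k : ℕ => c q k * t^k - c q k * (q*t)^k) := S1.sub S2
  have hd : (∑' k : ℕ, (c q k * t^k - c q k * (q*t)^k))
      = ∑' k : ℕ, (q*t) * (c q k * (q*t)^k) := by
    have h1 := tsum_eq_zero_add' (f := fun k : ℕ => c q k * t^k - c q k * (q*t)^k)
      ((summable_nat_add_iff 1).mpr Sd)
    simp only [c_zero, pow_zero, mul_one, sub_self, zero_add] at h1
    rw [h1]
    refine tsum_congr fun k => ?_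
    have e := key k
    simp only [mul_pow]
    linear_combination (t^(k+1)) * e
  rw [add_mul, one_mul, ← tsum_mul_left, ← hd, Summable.tsum_sub S1 S2]
  ring

lemma F_prod (hq0 : 0 < q) (hq1 : q < 1) (s : ℝ) : ∀ n : ℕ,
    (∑' k : ℕ, c q k * s^k)
      = (∏ j ∈ Finset.range n, (1 + q^(j+1) * s)) * ∑' k : ℕ, c q k * (q^n * s)^k := by
  intro n
  induction n with
  | zero => simp
  | succ n ih =>
    rw [ih, F_funeq hq0 hq1 (q^n * s), Finset.prod_range_succ]
    have e1 : q * (q^n * s) = q^(n+1) * s := by ring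
    rw [e1]
    ring

set_option maxHeartbeats 1000000 in
lemma tail_tendsto (hq0 : 0 < q) (hq1 : q < 1) (s : ℝ) :
    Tendsto (fun n : ℕ => ∑' k : ℕ, c q k * (q^n * s)^k) atTop (nhds 1) := by
  have hM : Summable (fun k : ℕ => c q (k+1) * |s|^(k+1)) :=
    (summable_nat_add_iff 1).mpr (summable_c hq0 hq1 |s|)
  set M := ∑' k : ℕ, c q (k+1) * |s|^(k+1) with hMdef
  have hbound : ∀ n : ℕ, |(∑' k : ℕ, c q k * (q^n * s)^k) - 1| ≤ q^n * M := by
    intro n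
    have Sn : Summable (fun k : ℕ => c q k * (q^n * s)^k) := summable_c hq0 hq1 _
    have Stail : Summable (fun k : ℕ => c q (k+1) * (q^n * s)^(k+1)) :=
      (summable_nat_add_iff 1).mpr Sn
    have h1 := tsum_eq_zero_add' (f := fun k : ℕ => c q k * (q^n * s)^k) Stail
    simp only [c_zero, pow_zero, mul_one, one_mul] at h1
    rw [h1]
    have e0 : |1 + (∑' k : ℕ, c q (k+1) * (q^n * s)^(k+1)) - 1|
        = |∑' k : ℕ, c q (k+1) * (q^n * s)^(k+1)| := by
      congr 1
      ring
    rw [e0]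
    have hterm : ∀ k : ℕ, ‖c q (k+1) * (q^n * s)^(k+1)‖ ≤ q^n * (c q (k+1) * |s|^(k+1)) := by
      intro k
      have hcp := (c_pos hq0 hq1 (k+1)).le
      have eabs : ‖c q (k+1) * (q^n * s)^(k+1)‖ = c q (k+1) * ((q^n)^(k+1) * |s|^(k+1)) := by
        rw [Real.norm_eq_abs, abs_mul, abs_pow, abs_mul, abs_of_nonneg hcp,
          abs_of_nonneg (pow_nonneg hq0.le n), mul_pow]
      rw [eabs]
      have h2 : (q^n)^(k+1) ≤ q^n := by
        rw [← pow_mul]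
        exact pow_le_pow_of_le_one hq0.le hq1.le (Nat.le_mul_of_pos_right n (by omega))
      have h3 : (0:ℝ) ≤ |s|^(k+1) := pow_nonneg (abs_nonneg s) (k+1)
      calc c q (k+1) * ((q^n)^(k+1) * |s|^(k+1)) ≤ c q (k+1) * (q^n * |s|^(k+1)) := by
            apply mul_le_mul_of_nonneg_left _ hcp
            exact mul_le_mul_of_nonneg_right h2 h3
        _ = q^n * (c q (k+1) * |s|^(k+1)) := by ring
    have hnorm : ‖∑' k : ℕ, c q (k+1) * (q^n * s)^(k+1)‖
        ≤ ∑' k : ℕ, ‖c q (k+1) * (q^n * s)^(k+1)‖ := norm_tsum_le_tsum_norm Stail.abs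
    have hle : ∑' k : ℕ, ‖c q (k+1) * (q^n * s)^(k+1)‖
        ≤ ∑' k : ℕ, q^n * (c q (k+1) * |s|^(k+1)) :=
      Summable.tsum_le_tsum hterm Stail.abs (hM.mul_left _)
    have heq : ∑' k : ℕ, q^n * (c q (k+1) * |s|^(k+1)) = q^n * M := tsum_mul_left
    rw [← Real.norm_eq_abs]
    calc ‖∑' k : ℕ, c q (k+1) * (q^n * s)^(k+1)‖
        ≤ ∑' k : ℕ, ‖c q (k+1) * (q^n * s)^(k+1)‖ := hnorm
      _ ≤ ∑' k : ℕ, q^n * (c q (k+1) * |s|^(k+1)) := hle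
      _ = q^n * M := heq
  have hq' : Tendsto (fun n : ℕ => q^n * M) atTop (nhds 0) := by
    simpa using (tendsto_pow_atTop_nhds_zero_of_lt_one hq0.le hq1).mul_const M
  have h : Tendsto (fun n : ℕ => (∑' k : ℕ, c q k * (q^n * s)^k) - 1) atTop (nhds 0) :=
    squeeze_zero_norm (fun n => by simpa [Real.norm_eq_abs] using hbound n) hq'
  have := h.add_const 1
  simpa using this

lemma mult (hq0 : 0 < q) (hq1 : q < 1) (s : ℝ) :
    Multipliable (fun k : ℕ => 1 + q^(k+1) * s) := by
  have h1 : Tendsto (fun k : ℕ => q^(k+1) * |s|) atTop (nhds 0) := by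
    simpa using (((tendsto_pow_atTop_nhds_zero_of_lt_one hq0.le hq1).comp
      (tendsto_add_atTop_nat 1)).mul_const |s|)
  obtain ⟨N, hN⟩ := (h1.eventually_lt_const (by norm_num : (0:ℝ) < 1/2)).exists_forall_of_atTop
  have habs : ∀ k : ℕ, N ≤ k → |q^(k+1) * s| < 1/2 := by
    intro k hk
    have := hN k hk
    rwa [abs_mul, abs_of_nonneg (pow_nonneg hq0.le _)]
  have hpos : ∀ k : ℕ, N ≤ k → 0 < 1 + q^(k+1) * s := by
    intro k hk
    have := abs_lt.mp (habs k hk)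
    linarith [this.1]
  have hlog : Summable (fun k : ℕ => Real.log (1 + q^(k+1) * s)) := by
    rw [← summable_nat_add_iff N]
    have hgeo : Summable (fun k : ℕ => ((3/2) * (q^(N+1) * |s|)) * q^k) :=
      (summable_geometric_of_lt_one hq0.le hq1).mul_left _
    apply Summable.of_norm_bounded hgeo
    intro k
    have hk' : N ≤ k + N := by omega
    have hb := (habs (k+N) hk').le
    have hpos' := hpos (k+N) hk'
    have hcx : ‖(Complex.log (1 + (q^(k+N+1) * s : ℝ)))‖ ≤ (3/2) * ‖((q^(k+N+1) * s : ℝ) : ℂ)‖ := by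
      apply Complex.norm_log_one_add_half_le_self
      rw [Complex.norm_real, Real.norm_eq_abs]
      exact hb
    rw [← Complex.ofReal_one, ← Complex.ofReal_add, ← Complex.ofReal_log hpos'.le] at hcx
    rw [Complex.norm_real, Complex.norm_real, Real.norm_eq_abs, Real.norm_eq_abs] at hcx
    rw [Real.norm_eq_abs]
    calc |Real.log (1 + q^(k+N+1) * s)| ≤ (3/2) * |q^(k+N+1) * s| := hcx
      _ ≤ (3/2) * (q^(N+1) * |s|) * q^k := by
          rw [abs_mul, abs_of_nonneg (pow_nonneg hq0.le _)]
          have : q^(k+N+1) = q^(N+1) * q^k := by rw [← pow_add]; ring_nf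
          rw [this]
          ring_nf
          nlinarith [pow_nonneg hq0.le k, pow_nonneg hq0.le (N+1), abs_nonneg s]
  apply Multipliable.mul_compl (s := Set.Iio N)
  · exact (Set.finite_Iio N).multipliable _
  · have hfin : ∀ x : ((Set.Iio N : Set ℕ)ᶜ : Set ℕ), 0 < 1 + q^((x:ℕ)+1) * s := by
      intro x
      have hx : N ≤ (x:ℕ) := by
        have := x.2
        simp [Set.mem_compl_iff, Set.mem_Iio] at this
        omega
      exact hpos _ hx
    have hsublog : Summable (fun x : ((Set.Iio N : Set ℕ)ᶜ : Set ℕ) =>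
        Real.log (1 + q^((x:ℕ)+1) * s)) := hlog.subtype _
    exact Real.multipliable_of_summable_log hfin hsublog

end GFProd

/-- The recursively defined binomial-moment generating sequence has generating function
`∏_{k=1}^∞ (1 + q^k s)`. -/
theorem generating_function_product (q : ℝ) (hq : q ∈ Set.Ioo (0 : ℝ) 1)
    (β : ℕ → ℝ) (hβ0 : β 0 = 1)
    (hβ : ∀ k : ℕ, 1 ≤ k →
      β k = (1 / (k : ℝ)) *
        ∑ ℓ ∈ Finset.Icc 1 k, (-1 : ℝ) ^ (ℓ + 1) * (q ^ ℓ / (1 - q ^ ℓ)) * β (k - ℓ)) :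
    ∀ s : ℝ,
      Summable (fun k : ℕ => β k * s ^ k) ∧
      Multipliable (fun k : ℕ => 1 + q ^ (k + 1) * s) ∧
      ∑' k : ℕ, β k * s ^ k = ∏' k : ℕ, (1 + q ^ (k + 1) * s) := by
  obtain ⟨hq0, hq1⟩ := hq
  intro s
  have hbc : ∀ k, β k = GFProd.c q k := GFProd.beta_eq hq0 hq1 β hβ0 hβ
  have hfun : (fun k : ℕ => β k * s ^ k) = fun k : ℕ => GFProd.c q k * s ^ k :=
    funext fun k => by rw [hbc k]
  refine ⟨?_, GFProd.mult hq0 hq1 s, ?_⟩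
  · rw [hfun]; exact GFProd.summable_c hq0 hq1 s
  · have hM := GFProd.mult hq0 hq1 s
    have hP := hM.hasProd.tendsto_prod_nat
    have hT := hP.mul (GFProd.tail_tendsto hq0 hq1 s)
    have hconst : (fun n : ℕ => (∏ j ∈ Finset.range n, (1 + q^(j+1) * s)) *
        ∑' k : ℕ, GFProd.c q k * (q^n * s)^k)
        = fun _ : ℕ => ∑' k : ℕ, GFProd.c q k * s ^ k :=
      funext fun n => (GFProd.F_prod hq0 hq1 s n).symm
    rw [hconst] at hT
    have h := tendsto_nhds_unique hT tendsto_const_nhds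
    rw [mul_one] at h
    rw [hfun]
    exact h.symm
end

section
/- Let μ be the standard complex Gaussian measure on ℂ and μ^⊗m the product measure on ℂ^m. Let A and B be complex n×m matrices. Then ∫_{ℂ^m} ( ∏_{j=1}^n (Av)_j ) · ( ∏_{j=1}^n conj((Bv)_j) ) dμ^⊗m(v) = perm(AB*), where B* is the conjugate transpose of B; equivalently, if Z_j = (Av)_j and W_j = (Bv)_j, then E[Z_1⋯Z_n · conj(W_1)⋯conj(W_n)] = Σ_{σ ∈ S_n} ∏_{j=1}^n E[Z_j conj(W_{σ(j)})]. In particular, for jointly complex Gaussian Z_1,…,Z_n of mean zero, E|Z_1⋯Z_n|² = perm( (E Z_j conj(Z_k))_{j,k} ). -/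
open MeasureTheory Complex

open Set
open scoped NNReal ENNReal

/-- The standard complex Gaussian measure on `ℂ`, with density `exp (-|z|^2) / π`
with respect to Lebesgue (area) measure. -/
noncomputable def gaussianC : Measure ℂ :=
  volume.withDensity fun z => ENNReal.ofReal (Real.exp (-(‖z‖) ^ 2) / Real.pi)

lemma gdens_nonneg (z : ℂ) : 0 ≤ Real.exp (-(‖z‖) ^ 2) / Real.pi := by positivity

lemma gdens_meas : Measurable fun z : ℂ => (Real.exp (-(‖z‖) ^ 2) / Real.pi).toNNReal := by
  have : Continuous fun z : ℂ => (Real.exp (-(‖z‖) ^ 2) / Real.pi) := by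
    continuity
  exact (this.measurable).real_toNNReal

lemma gaussianC_integral_eq (F : ℂ → ℂ) :
    ∫ z, F z ∂gaussianC = ∫ z, (Real.exp (-(‖z‖) ^ 2) / Real.pi) • F z := by
  rw [show gaussianC =
      volume.withDensity fun z => ((Real.exp (-(‖z‖) ^ 2) / Real.pi).toNNReal : ENNReal)
    from rfl]
  rw [integral_withDensity_eq_integral_smul gdens_meas]
  congr 1
  ext z
  rw [NNReal.smul_def, Real.coe_toNNReal _ (gdens_nonneg z)]

lemma gdens_cont : Continuous fun z : ℂ => Real.exp (-(‖z‖) ^ 2) / Real.pi := by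
  continuity

open Real in
lemma polar_step (a b : ℕ) :
    ∫ z : ℂ, (Real.exp (-(‖z‖) ^ 2) / Real.pi) • (z ^ a * (starRingEnd ℂ) z ^ b) =
      (∫ r in Ioi (0:ℝ), ((r ^ (a + b + 1) * Real.exp (-r ^ 2) / Real.pi : ℝ) : ℂ)) *
        ∫ θ in Ioo (-π) π, Complex.exp (((a : ℂ) - b) * Complex.I * θ) := by
  rw [← Complex.integral_comp_polarCoord_symm]
  rw [show polarCoord.target = Ioi (0:ℝ) ×ˢ Ioo (-Real.pi) Real.pi from rfl]
  rw [Measure.volume_eq_prod, ← MeasureTheory.setIntegral_prod_mul]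
  refine setIntegral_congr_fun (measurableSet_Ioi.prod measurableSet_Ioo) ?_
  rintro ⟨r, θ⟩ ⟨hr, hθ⟩
  simp only [Complex.polarCoord_symm_apply]
  have hz : (r : ℂ) * (Real.cos θ + Real.sin θ * Complex.I) = r * Complex.exp (θ * Complex.I) := by
    rw [Complex.exp_mul_I]
    push_cast
    ring
  rw [hz]
  have habs : ‖((r : ℂ) * Complex.exp (θ * Complex.I))‖ = r := by
    rw [norm_mul, Complex.norm_exp]
    simp [abs_of_pos (mem_Ioi.mp hr)]
  rw [habs]
  have hconj : (starRingEnd ℂ) ((r : ℂ) * Complex.exp (θ * Complex.I)) =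
      r * Complex.exp (-(θ * Complex.I)) := by
    rw [map_mul, ← Complex.exp_conj]
    simp [Complex.conj_ofReal]
  rw [hconj, mul_pow, mul_pow, ← Complex.exp_nat_mul, ← Complex.exp_nat_mul]
  rw [smul_smul]
  rw [Complex.real_smul]
  push_cast
  rw [show ((a:ℂ) - b) * Complex.I * θ = (a:ℂ)*(θ*Complex.I) + (b:ℂ) * -(θ*Complex.I) by ring,
    Complex.exp_add]
  ring

open Real in
lemma r_int (a : ℕ) :
    ∫ r in Ioi (0:ℝ), r ^ (2*a + 1) * Real.exp (-r^2) / Real.pi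
      = a.factorial / (2*Real.pi) := by
  rw [integral_div]
  have congr1 : ∫ r in Ioi (0:ℝ), r ^ (2*a+1) * Real.exp (-r^2)
      = ∫ r in Ioi (0:ℝ), r ^ ((2*a+1 : ℕ):ℝ) * Real.exp (-r^(2:ℝ)) := by
    refine (setIntegral_congr_fun measurableSet_Ioi fun x hx => ?_).symm
    rw [Real.rpow_natCast, show (2:ℝ) = ((2:ℕ):ℝ) by norm_num, Real.rpow_natCast]
  have hq : (-1:ℝ) < ((2*a+1 : ℕ):ℝ) := lt_of_lt_of_le (by norm_num) (Nat.cast_nonneg _)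
  rw [congr1, _root_.integral_rpow_mul_exp_neg_rpow (by norm_num) hq]
  rw [show (((2*a+1 : ℕ):ℝ) + 1)/2 = (a:ℝ) + 1 by push_cast; ring]
  rw [Real.Gamma_nat_eq_factorial]
  ring

open Real in
lemma theta_int (a b : ℕ) (h : a ≠ b) :
    ∫ θ in Ioo (-Real.pi) Real.pi, Complex.exp (((a:ℂ)-b)*Complex.I*θ) = 0 := by
  have hC : ((a:ℂ) - b) * Complex.I ≠ 0 :=
    mul_ne_zero (sub_ne_zero.mpr (by exact_mod_cast h)) Complex.I_ne_zero
  rw [← integral_Ioc_eq_integral_Ioo,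
    ← intervalIntegral.integral_of_le (by linarith [Real.pi_pos] : -Real.pi ≤ Real.pi)]
  rw [integral_exp_mul_complex hC]
  have key : Complex.exp (((a:ℂ)-b)*Complex.I*(Real.pi:ℂ))
      = Complex.exp (((a:ℂ)-b)*Complex.I*((-Real.pi : ℝ):ℂ)) := by
    set k : ℤ := (a : ℤ) - (b : ℤ) with hk
    have h1 : ((a:ℂ)-b)*Complex.I*((Real.pi:ℝ):ℂ)
        = ((a:ℂ)-b)*Complex.I*((-Real.pi:ℝ):ℂ)
          + (k:ℂ) * (2*(Real.pi:ℂ)*Complex.I) := by rw [hk]; push_cast; ring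
    rw [h1, Complex.exp_add, Complex.exp_int_mul_two_pi_mul_I k, mul_one]
  rw [key, sub_self, zero_div]

open Real in
lemma gaussianC_moment (a b : ℕ) :
    ∫ z : ℂ, z ^ a * (starRingEnd ℂ) z ^ b ∂gaussianC
      = if a = b then (a.factorial : ℂ) else 0 := by
  rw [gaussianC_integral_eq, polar_step]
  by_cases h : a = b
  · subst h
    have h1 : ∫ θ in Ioo (-Real.pi) Real.pi, Complex.exp (((a:ℂ)-a)*Complex.I*θ)
        = ((2*Real.pi : ℝ) : ℂ) := by
      simp only [sub_self, zero_mul, Complex.exp_zero]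
      rw [setIntegral_const, Real.volume_real_Ioo_of_le (by linarith [Real.pi_pos] : -Real.pi ≤ Real.pi),
        Complex.real_smul, mul_one]
      push_cast
      ring
    have h2 : ∫ r in Ioi (0:ℝ), ((r ^ (a + a + 1) * Real.exp (-r ^ 2) / Real.pi : ℝ) : ℂ)
        = (((a.factorial : ℝ) / (2*Real.pi) : ℝ) : ℂ) := by
      have e1 := integral_ofReal (𝕜 := ℂ)
        (f := fun r => r ^ (a+a+1) * Real.exp (-r^2) / Real.pi)
        (μ := volume.restrict (Ioi (0:ℝ)))
      refine Eq.trans e1 ?_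
      rw [show a + a + 1 = 2*a+1 by ring, r_int]
      rfl
    rw [h1, h2, if_pos rfl]
    rw [← Complex.ofReal_mul]
    rw [div_mul_cancel₀ _ (by positivity : (2*Real.pi : ℝ) ≠ 0)]
    norm_num
  · rw [theta_int a b h, mul_zero, if_neg h]

lemma integrable_abs_pow_gauss (c : ℕ) :
    Integrable (fun t : ℝ => |t| ^ c * Real.exp (-t ^ 2)) := by
  have hs : (-1:ℝ) < c := lt_of_lt_of_le (by norm_num) (Nat.cast_nonneg _)
  have h := integrableOn_rpow_mul_exp_neg_mul_sq one_pos hs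
  have h' : IntegrableOn (fun t : ℝ => |t| ^ c * Real.exp (-t ^ 2)) (Ioi 0) := by
    refine h.congr_fun ?_ measurableSet_Ioi
    intro x hx
    show x ^ (c:ℝ) * Real.exp (-1 * x ^ 2) = |x| ^ c * Real.exp (-x ^ 2)
    rw [_root_.abs_of_pos hx, ← Real.rpow_natCast x c, neg_one_mul]
  rw [← integrableOn_univ, ← Set.Iio_union_Ici (a := (0:ℝ)), integrableOn_union]
  constructor
  · rw [← (Measure.measurePreserving_neg (volume : Measure ℝ)).integrableOn_comp_preimage
      (Homeomorph.neg ℝ).measurableEmbedding]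
    simp only [Function.comp_def, neg_sq, abs_neg, neg_preimage, neg_Iio, neg_neg, neg_zero]
    exact h'
  · exact Iff.mpr integrableOn_Ici_iff_integrableOn_Ioi h'

lemma integrable_abs_pow_gaussC (c : ℕ) :
    Integrable (fun z : ℂ => ‖z‖ ^ c * Real.exp (-(‖z‖) ^ 2)) := by
  have hu := integrable_abs_pow_gauss c
  have hw : Integrable (fun t : ℝ => Real.exp (-t ^ 2)) := by
    simpa [neg_mul, one_mul] using integrable_exp_neg_mul_sq (one_pos)
  have hF : Integrable (fun p : ℝ × ℝ =>
      |p.1| ^ c * Real.exp (-p.1 ^ 2) * Real.exp (-p.2 ^ 2)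
        + Real.exp (-p.1 ^ 2) * (|p.2| ^ c * Real.exp (-p.2 ^ 2))) (volume : Measure (ℝ × ℝ)) := by
    rw [Measure.volume_eq_prod]
    exact (hu.mul_prod hw).add (hw.mul_prod hu)
  have hG : Integrable (fun z : ℂ =>
      |z.re| ^ c * Real.exp (-z.re ^ 2) * Real.exp (-z.im ^ 2)
        + Real.exp (-z.re ^ 2) * (|z.im| ^ c * Real.exp (-z.im ^ 2))) (volume : Measure ℂ) := by
    have hmp := Complex.volume_preserving_equiv_real_prod
    exact (hmp.integrable_comp_emb Complex.measurableEquivRealProd.measurableEmbedding).mpr hF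
  refine Integrable.mono' (hG.const_mul ((2:ℝ) ^ c)) ?_ (Filter.Eventually.of_forall fun z => ?_)
  · exact ((continuous_norm.pow c).mul
      ((continuous_norm.pow 2).neg.rexp)).aestronglyMeasurable
  · have hexp : Real.exp (-(‖z‖) ^ 2) = Real.exp (-z.re ^ 2) * Real.exp (-z.im ^ 2) := by
      rw [← Real.exp_add]
      congr 1
      rw [Complex.sq_norm, Complex.normSq_apply]
      ring
    have h0 : ‖z‖ ^ c ≤ 2 ^ c * (|z.re| ^ c + |z.im| ^ c) := by
      have s1 : ‖z‖ ^ c ≤ (|z.re| + |z.im|) ^ c :=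
        pow_le_pow_left₀ (norm_nonneg z) (Complex.norm_le_abs_re_add_abs_im z) c
      have s2 : (|z.re| + |z.im|) ^ c ≤ (2 * max |z.re| |z.im|) ^ c := by
        apply pow_le_pow_left₀ (by positivity)
        rcases le_total |z.re| |z.im| with hle | hle
        · rw [max_eq_right hle]; linarith
        · rw [max_eq_left hle]; linarith
      have s3 : (2 * max |z.re| |z.im|) ^ c = 2 ^ c * (max |z.re| |z.im|) ^ c := mul_pow _ _ _
      have s4 : (max |z.re| |z.im|) ^ c ≤ |z.re| ^ c + |z.im| ^ c := by
        rcases le_total |z.re| |z.im| with hle | hle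
        · rw [max_eq_right hle]; exact le_add_of_nonneg_left (by positivity)
        · rw [max_eq_left hle]; exact le_add_of_nonneg_right (by positivity)
      calc ‖z‖ ^ c ≤ (2 * max |z.re| |z.im|) ^ c := s1.trans s2
        _ = 2 ^ c * (max |z.re| |z.im|) ^ c := s3
        _ ≤ 2 ^ c * (|z.re| ^ c + |z.im| ^ c) := by
            exact mul_le_mul_of_nonneg_left s4 (by positivity)
    rw [Real.norm_eq_abs, _root_.abs_of_nonneg (by positivity), hexp]
    calc ‖z‖ ^ c * (Real.exp (-z.re ^ 2) * Real.exp (-z.im ^ 2))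
        ≤ 2 ^ c * (|z.re| ^ c + |z.im| ^ c) * (Real.exp (-z.re ^ 2) * Real.exp (-z.im ^ 2)) :=
          mul_le_mul_of_nonneg_right h0 (by positivity)
      _ = 2 ^ c * (|z.re| ^ c * Real.exp (-z.re ^ 2) * Real.exp (-z.im ^ 2)
            + Real.exp (-z.re ^ 2) * (|z.im| ^ c * Real.exp (-z.im ^ 2))) := by ring

lemma gaussianC_integrable_moment (a b : ℕ) :
    Integrable (fun z : ℂ => z ^ a * (starRingEnd ℂ) z ^ b) gaussianC := by
  rw [show gaussianC =
      volume.withDensity fun z => ((Real.exp (-(‖z‖) ^ 2) / Real.pi).toNNReal : ENNReal)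
    from rfl]
  rw [integrable_withDensity_iff_integrable_smul gdens_meas]
  have heq : (fun z : ℂ =>
      ((Real.exp (-(‖z‖) ^ 2) / Real.pi).toNNReal : ℝ≥0) • (z ^ a * (starRingEnd ℂ) z ^ b))
      = fun z : ℂ => (Real.exp (-(‖z‖) ^ 2) / Real.pi) • (z ^ a * (starRingEnd ℂ) z ^ b) :=
    funext fun z => by rw [NNReal.smul_def, Real.coe_toNNReal _ (gdens_nonneg z)]
  rw [heq]
  refine Integrable.mono' (((integrable_abs_pow_gaussC (a + b)).mul_const (Real.pi)⁻¹))
    ?_ (Filter.Eventually.of_forall fun z => ?_)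
  · exact (gdens_cont.smul ((continuous_pow a).mul
      ((Complex.continuous_conj.pow b)))).aestronglyMeasurable
  · rw [norm_smul, Real.norm_eq_abs, _root_.abs_of_nonneg (gdens_nonneg z), norm_mul, norm_pow, norm_pow,
      Complex.norm_conj, ← pow_add]
    rw [div_eq_mul_inv]
    ring_nf
    exact le_refl _

instance : IsProbabilityMeasure gaussianC := by
  constructor
  have hint : Integrable (fun z : ℂ => Real.exp (-(‖z‖) ^ 2) / Real.pi) volume := by
    simpa using (integrable_abs_pow_gaussC 0).div_const Real.pi
  rw [gaussianC, withDensity_apply _ MeasurableSet.univ, Measure.restrict_univ,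
    ← ofReal_integral_eq_lintegral_ofReal hint (Filter.Eventually.of_forall gdens_nonneg)]
  have h3 : ∫ z : ℂ, Real.exp (-(‖z‖) ^ 2) = Real.pi := by
    have h2 := Complex.integral_rpow_mul_exp_neg_rpow (p := 2) (q := 0) one_le_two (by norm_num)
    rw [show ((0:ℝ)+2)/2 = 1 by norm_num, Real.Gamma_one] at h2
    calc ∫ z : ℂ, Real.exp (-(‖z‖) ^ 2)
        = ∫ z : ℂ, ‖z‖ ^ (0:ℝ) * Real.exp (-‖z‖ ^ (2:ℝ)) := by
          congr 1
          funext z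
          rw [Real.rpow_zero, one_mul,
            show (2:ℝ) = ((2:ℕ):ℝ) by norm_num, Real.rpow_natCast]
      _ = 2 * Real.pi / 2 * 1 := h2
      _ = Real.pi := by ring
  rw [show ∫ z : ℂ, Real.exp (-(‖z‖) ^ 2) / Real.pi
      = (∫ z : ℂ, Real.exp (-(‖z‖) ^ 2)) / Real.pi from integral_div _ _]
  rw [h3, div_self Real.pi_ne_zero, ENNReal.ofReal_one]

section PiGaussian

noncomputable local instance gaussianCSpace : MeasureSpace ℂ := ⟨gaussianC⟩

local instance : SigmaFinite (volume : Measure ℂ) := by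
  show SigmaFinite gaussianC
  infer_instance

lemma gaussianC_pi_integrable {m : ℕ} {φ : Fin m → ℂ → ℂ}
    (hφ : ∀ k, Integrable (φ k) gaussianC) :
    Integrable (fun v : Fin m → ℂ => ∏ k, φ k (v k)) (Measure.pi fun _ : Fin m => gaussianC) :=
  MeasureTheory.Integrable.fintype_prod (f := φ) hφ

lemma gaussianC_pi_integral {m : ℕ} (φ : Fin m → ℂ → ℂ) :
    ∫ v : Fin m → ℂ, ∏ k, φ k (v k) ∂(Measure.pi fun _ : Fin m => gaussianC)
      = ∏ k, ∫ z, φ k z ∂gaussianC :=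
  MeasureTheory.integral_fintype_prod_eq_prod (E := fun _ => ℂ) φ

end PiGaussian

section Comb
open Finset

variable {α β : Type*} [DecidableEq β]

/-- Permutations intertwining two fibrations correspond to families of fiber bijections. -/
def fiberPermEquiv (f g : α → β) :
    {σ : Equiv.Perm α // ∀ a, f a = g (σ a)} ≃ (∀ b, {a // f a = b} ≃ {a // g a = b}) where
  toFun := fun σ b =>
    { toFun := fun a => ⟨σ.1 a.1, by rw [← σ.2 a.1, a.2]⟩
      invFun := fun a => ⟨σ.1.symm a.1, by
        rw [σ.2 (σ.1.symm a.1), Equiv.apply_symm_apply, a.2]⟩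
      left_inv := fun a => Subtype.ext (σ.1.symm_apply_apply a.1)
      right_inv := fun a => Subtype.ext (σ.1.apply_symm_apply a.1) }
  invFun := fun E =>
    ⟨{ toFun := fun a => (E (f a) ⟨a, rfl⟩).1
       invFun := fun a => ((E (g a)).symm ⟨a, rfl⟩).1
       left_inv := by
         intro a
         have h2 : g ((E (f a) ⟨a, rfl⟩).1) = f a := (E (f a) ⟨a, rfl⟩).2
         have aux : ∀ b b' (h : b = b') (x : α) (hx : g x = b) (hx' : g x = b'),
             ((E b).symm ⟨x, hx⟩).1 = ((E b').symm ⟨x, hx'⟩).1 := by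
           rintro b b' rfl x hx hx'; rfl
         exact (aux _ _ h2 _ rfl h2).trans
           (congrArg Subtype.val ((E (f a)).symm_apply_apply ⟨a, rfl⟩))
       right_inv := by
         intro a
         have h2 : f (((E (g a)).symm ⟨a, rfl⟩).1) = g a := ((E (g a)).symm ⟨a, rfl⟩).2
         have aux : ∀ b b' (h : b = b') (x : α) (hx : f x = b) (hx' : f x = b'),
             ((E b) ⟨x, hx⟩).1 = ((E b') ⟨x, hx'⟩).1 := by
           rintro b b' rfl x hx hx'; rfl
         exact (aux _ _ h2 _ rfl h2).trans
           (congrArg Subtype.val ((E (g a)).apply_symm_apply ⟨a, rfl⟩)) },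
     fun a => ((E (f a)) ⟨a, rfl⟩).2.symm⟩
  left_inv := by
    intro σ
    apply Subtype.ext
    apply Equiv.ext
    intro a
    rfl
  right_inv := by
    intro E
    funext b
    apply Equiv.ext
    intro x
    apply Subtype.ext
    have aux : ∀ b b' (h : b = b') (y : α) (hy : f y = b) (hy' : f y = b'),
        ((E b) ⟨y, hy⟩).1 = ((E b') ⟨y, hy'⟩).1 := by
      rintro b b' rfl y hy hy'; rfl
    exact (aux _ _ x.2 _ rfl x.2).trans rfl

lemma card_equiv_eq {γ δ : Type*} [Fintype γ] [Fintype δ] [DecidableEq γ] [DecidableEq δ] :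
    Fintype.card (γ ≃ δ) =
      if Fintype.card γ = Fintype.card δ then (Fintype.card γ).factorial else 0 := by
  split_ifs with h
  · obtain ⟨e⟩ := Fintype.card_eq.mp h
    exact Fintype.card_equiv e
  · have : IsEmpty (γ ≃ δ) := ⟨fun e => h (Fintype.card_congr e)⟩
    exact Fintype.card_eq_zero

lemma count_perm_eq {n m : ℕ} (f g : Fin n → Fin m) :
    (∏ k : Fin m,
        if (univ.filter fun j => f j = k).card = (univ.filter fun j => g j = k).card
        then (((univ.filter fun j => f j = k).card.factorial : ℕ) : ℂ) else 0) =
      ∑ σ : Equiv.Perm (Fin n), if ∀ j, f j = g (σ j) then (1 : ℂ) else 0 := by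
  have hcard : ∑ σ : Equiv.Perm (Fin n), (if ∀ j, f j = g (σ j) then (1 : ℂ) else 0) =
      (Fintype.card {σ : Equiv.Perm (Fin n) // ∀ a, f a = g (σ a)} : ℂ) := by
    rw [Fintype.card_subtype]
    rw [Finset.sum_boole]
  rw [hcard, Fintype.card_congr (fiberPermEquiv f g), Fintype.card_pi]
  push_cast
  rw [Finset.prod_congr rfl]
  intro k _
  rw [card_equiv_eq]
  simp only [Fintype.card_subtype]
  split_ifs <;> simp

end Comb

lemma prod_eq_pow {n m : ℕ} (v : Fin m → ℂ) (f : Fin n → Fin m) :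
    ∏ j, v (f j) = ∏ k, v k ^ (Finset.univ.filter fun j => f j = k).card := by
  rw [← Finset.prod_fiberwise_of_maps_to (fun j _ => Finset.mem_univ (f j)) (fun j => v (f j))]
  refine (Finset.prod_congr rfl fun k _ => ?_).symm
  rw [Finset.prod_congr rfl (fun j hj => by rw [(Finset.mem_filter.mp hj).2] :
        ∀ j ∈ Finset.univ.filter fun j => f j = k, v (f j) = v k),
    Finset.prod_const]

set_option maxHeartbeats 2000000 in
/-- Wick/permanent formula for joint moments of complex Gaussians: if `Z = Av` and `W = Bv`
with `v` a vector of i.i.d. standard complex Gaussians, then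
`E[Z₁⋯Zₙ conj(W₁)⋯conj(Wₙ)] = perm(AB*)`. -/
theorem gaussian_moments_permanent (n m : ℕ) (A B : Matrix (Fin n) (Fin m) ℂ) :
    ∫ v : Fin m → ℂ,
        (∏ j : Fin n, A.mulVec v j) * (∏ j : Fin n, (starRingEnd ℂ) (B.mulVec v j))
        ∂(Measure.pi fun _ : Fin m => gaussianC) =
      (A * B.conjTranspose).permanent := by
  classical
  set μ := Measure.pi fun _ : Fin m => gaussianC with hμ
  set cnt : (Fin n → Fin m) → Fin m → ℕ :=
    fun f k => (Finset.univ.filter fun j => f j = k).card with hcnt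
  set cA : (Fin n → Fin m) → ℂ := fun f => ∏ j, A j (f j) with hcA
  set cB : (Fin n → Fin m) → ℂ := fun g => ∏ j, (starRingEnd ℂ) (B j (g j)) with hcB
  have hintegrand : ∀ v : Fin m → ℂ,
      (∏ j : Fin n, A.mulVec v j) * (∏ j : Fin n, (starRingEnd ℂ) (B.mulVec v j))
      = ∑ f : Fin n → Fin m, ∑ g : Fin n → Fin m,
          (cA f * cB g) *
            ∏ k : Fin m, (v k ^ cnt f k * (starRingEnd ℂ) (v k) ^ cnt g k) := by
    intro v
    have eA : (∏ j : Fin n, A.mulVec v j)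
        = ∑ f : Fin n → Fin m, ∏ j, (A j (f j) * v (f j)) := by
      simp only [Matrix.mulVec, dotProduct]
      rw [Finset.prod_univ_sum, Fintype.piFinset_univ]
    have eB : (∏ j : Fin n, (starRingEnd ℂ) (B.mulVec v j))
        = ∑ g : Fin n → Fin m, ∏ j, ((starRingEnd ℂ) (B j (g j)) * (starRingEnd ℂ) (v (g j))) := by
      simp only [Matrix.mulVec, dotProduct, map_sum, map_mul]
      rw [Finset.prod_univ_sum, Fintype.piFinset_univ]
    rw [eA, eB, Finset.sum_mul_sum]
    refine Finset.sum_congr rfl fun f _ => Finset.sum_congr rfl fun g _ => ?_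
    rw [Finset.prod_mul_distrib, Finset.prod_mul_distrib,
      prod_eq_pow v f, prod_eq_pow (fun k => (starRingEnd ℂ) (v k)) g]
    rw [show (∏ k : Fin m, (v k ^ cnt f k * (starRingEnd ℂ) (v k) ^ cnt g k))
        = (∏ k, v k ^ cnt f k) * ∏ k, (starRingEnd ℂ) (v k) ^ cnt g k
      from Finset.prod_mul_distrib]
    ring
  have hI : ∀ (f g : Fin n → Fin m), Integrable
      (fun v : Fin m → ℂ => ∏ k, (v k ^ cnt f k * (starRingEnd ℂ) (v k) ^ cnt g k)) μ :=
    fun f g => gaussianC_pi_integrable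
      (fun k => gaussianC_integrable_moment (cnt f k) (cnt g k))
  have step1 : ∫ v : Fin m → ℂ,
      (∏ j : Fin n, A.mulVec v j) * (∏ j : Fin n, (starRingEnd ℂ) (B.mulVec v j)) ∂μ
      = ∑ f : Fin n → Fin m, ∑ g : Fin n → Fin m,
          (cA f * cB g) *
            ∫ v : Fin m → ℂ,
              ∏ k : Fin m, (v k ^ cnt f k * (starRingEnd ℂ) (v k) ^ cnt g k) ∂μ := by
    rw [integral_congr_ae (Filter.Eventually.of_forall hintegrand)]
    rw [integral_finset_sum _ (fun f _ =>
      integrable_finset_sum _ (fun g _ => ((hI f g).const_mul _)))]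
    refine Finset.sum_congr rfl fun f _ => ?_
    rw [integral_finset_sum _ (fun g _ => ((hI f g).const_mul _))]
    exact Finset.sum_congr rfl fun g _ => integral_const_mul _ _
  have step2 : ∀ (f g : Fin n → Fin m),
      ∫ v : Fin m → ℂ,
          ∏ k : Fin m, (v k ^ cnt f k * (starRingEnd ℂ) (v k) ^ cnt g k) ∂μ
        = ∑ σ : Equiv.Perm (Fin n), if ∀ j, f j = g (σ j) then (1:ℂ) else 0 := by
    intro f g
    rw [hμ, gaussianC_pi_integral (fun k => fun z => z ^ cnt f k * (starRingEnd ℂ) z ^ cnt g k)]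
    rw [Finset.prod_congr rfl fun k _ => gaussianC_moment (cnt f k) (cnt g k)]
    exact count_perm_eq f g
  rw [step1]
  have step2' : ∑ f : Fin n → Fin m, ∑ g : Fin n → Fin m,
        (cA f * cB g) *
          ∫ v : Fin m → ℂ,
            ∏ k : Fin m, (v k ^ cnt f k * (starRingEnd ℂ) (v k) ^ cnt g k) ∂μ
      = ∑ f : Fin n → Fin m, ∑ g : Fin n → Fin m,
        (cA f * cB g) *
          ∑ σ : Equiv.Perm (Fin n), if ∀ j, f j = g (σ j) then (1:ℂ) else 0 :=
    Finset.sum_congr rfl fun f _ => Finset.sum_congr rfl fun g _ => by rw [step2 f g]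
  rw [step2']
  -- collapse the f-sum
  set t : (Fin n → Fin m) → (Fin n → Fin m) → Equiv.Perm (Fin n) → ℂ :=
    fun f g σ => if f = (fun j => g (σ j)) then cA f * cB g else 0 with ht
  have step3 : ∑ f : Fin n → Fin m, ∑ g : Fin n → Fin m,
      (cA f * cB g) * ∑ σ : Equiv.Perm (Fin n), (if ∀ j, f j = g (σ j) then (1:ℂ) else 0)
      = ∑ σ : Equiv.Perm (Fin n), ∑ g : Fin n → Fin m, cA (fun j => g (σ j)) * cB g := by
    have c0 : ∀ (f g : Fin n → Fin m),
        (cA f * cB g) * ∑ σ : Equiv.Perm (Fin n), (if ∀ j, f j = g (σ j) then (1:ℂ) else 0)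
        = ∑ σ : Equiv.Perm (Fin n), t f g σ := by
      intro f g
      rw [Finset.mul_sum]
      refine Finset.sum_congr rfl fun σ _ => ?_
      rw [mul_ite, mul_one, mul_zero, ht]
      exact if_congr funext_iff.symm rfl rfl
    have c1 : ∑ f : Fin n → Fin m, ∑ g : Fin n → Fin m, ∑ σ : Equiv.Perm (Fin n), t f g σ
        = ∑ g : Fin n → Fin m, ∑ f : Fin n → Fin m, ∑ σ : Equiv.Perm (Fin n), t f g σ :=
      Finset.sum_comm
    have c2 : ∑ g : Fin n → Fin m, ∑ f : Fin n → Fin m, ∑ σ : Equiv.Perm (Fin n), t f g σ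
        = ∑ g : Fin n → Fin m, ∑ σ : Equiv.Perm (Fin n), ∑ f : Fin n → Fin m, t f g σ :=
      Finset.sum_congr rfl fun g _ => Finset.sum_comm
    have c3 : ∑ g : Fin n → Fin m, ∑ σ : Equiv.Perm (Fin n), ∑ f : Fin n → Fin m, t f g σ
        = ∑ σ : Equiv.Perm (Fin n), ∑ g : Fin n → Fin m, ∑ f : Fin n → Fin m, t f g σ :=
      Finset.sum_comm
    rw [Finset.sum_congr rfl fun f _ => Finset.sum_congr rfl fun g _ => c0 f g, c1, c2, c3]
    refine Finset.sum_congr rfl fun σ _ => Finset.sum_congr rfl fun g _ => ?_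
    rw [ht]
    rw [Finset.sum_ite_eq' Finset.univ (fun j => g (σ j)) (fun f => cA f * cB g)]
    rw [if_pos (Finset.mem_univ _)]
  rw [step3]
  -- rewrite each inner term and reindex over σ⁻¹
  have step4 : ∀ (σ : Equiv.Perm (Fin n)) (g : Fin n → Fin m),
      cA (fun j => g (σ j)) = ∏ j, A (σ⁻¹ j) (g j) := by
    intro σ g
    show ∏ j, A j (g (σ j)) = ∏ j, A (σ⁻¹ j) (g j)
    have h := Equiv.prod_comp σ⁻¹ (fun j => A j (g (σ j)))
    refine h.symm.trans (Finset.prod_congr rfl fun j _ => ?_)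
    rw [← Equiv.Perm.mul_apply, mul_inv_cancel, Equiv.Perm.one_apply]
  have step5 : (A * B.conjTranspose).permanent
      = ∑ σ : Equiv.Perm (Fin n), ∑ g : Fin n → Fin m, (∏ j, A (σ j) (g j)) * cB g := by
    rw [Matrix.permanent]
    refine Finset.sum_congr rfl fun σ _ => ?_
    have expand : ∀ j : Fin n, (A * B.conjTranspose) (σ j) j
        = ∑ k, A (σ j) k * (starRingEnd ℂ) (B j k) := by
      intro j
      rw [Matrix.mul_apply]
      exact Finset.sum_congr rfl fun k _ => by rw [Matrix.conjTranspose_apply, ← starRingEnd_apply]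
    rw [Finset.prod_congr rfl fun j _ => expand j, Finset.prod_univ_sum, Fintype.piFinset_univ]
    refine Finset.sum_congr rfl fun g _ => ?_
    rw [Finset.prod_mul_distrib]
  rw [step5]
  refine Fintype.sum_bijective (fun σ : Equiv.Perm (Fin n) => σ⁻¹)
    (Equiv.inv (Equiv.Perm (Fin n))).bijective _ _ fun σ => ?_
  refine Finset.sum_congr rfl fun g _ => ?_
  rw [step4 σ g]
end

section
/- Let z_1, …, z_n be points of the open unit disk 𝔻 ⊂ ℂ, and define the n×n matrices A and M by A_{jk} = (1 − z_j conj(z_k))^{−1} and M_{jk} = (1 − z_j conj(z_k))^{−2}. Then perm(A) · det(A) = det(M). -/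
open Finset Matrix Polynomial Equiv

namespace Borch

variable {R : Type} [CommRing R] {S : Type} [CommRing S]

/-- The "cleared-denominator" Cauchy-type matrix. -/
def Bm {n : ℕ} (z w : Fin n → R) : Matrix (Fin n) (Fin n) R :=
  Matrix.of fun j k => ∏ m ∈ Finset.univ.erase k, (1 - z j * w m)

/-- Its entrywise square. -/
def B2 {n : ℕ} (z w : Fin n → R) : Matrix (Fin n) (Fin n) R :=
  Matrix.of fun j k => (∏ m ∈ Finset.univ.erase k, (1 - z j * w m)) ^ 2

lemma Bm_apply {n : ℕ} (z w : Fin n → R) (j k : Fin n) :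
    Bm z w j k = ∏ m ∈ Finset.univ.erase k, (1 - z j * w m) := rfl

lemma B2_apply {n : ℕ} (z w : Fin n → R) (j k : Fin n) :
    B2 z w j k = (Bm z w j k) ^ 2 := rfl

/-- permanent commutes with ring hom mapping. -/
lemma permanent_map {m : Type} [DecidableEq m] [Fintype m]
    (f : R →+* S) (M : Matrix m m R) :
    (M.map f).permanent = f M.permanent := by
  simp only [Matrix.permanent, map_sum f, map_prod f, Matrix.map_apply]

/-- Row scaling for permanent. -/
lemma permanent_mul_row {m : Type} [DecidableEq m] [Fintype m]
    (v : m → R) (M : Matrix m m R) :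
    (Matrix.of fun i j => v i * M i j).permanent = (∏ i, v i) * M.permanent := by
  simp only [Matrix.permanent, Matrix.of_apply, Finset.prod_mul_distrib, Finset.mul_sum]
  refine Finset.sum_congr rfl fun σ _ => ?_
  rw [Equiv.prod_comp σ v]

/-- Laplace expansion of the permanent along column 0 (no signs). -/
lemma permanent_succ_column_zero {n : ℕ} (A : Matrix (Fin n.succ) (Fin n.succ) R) :
    A.permanent = ∑ i : Fin n.succ, A i 0 *
      (A.submatrix i.succAbove Fin.succ).permanent := by
  rw [Matrix.permanent, Finset.univ_perm_fin_succ, ← Finset.univ_product_univ, Finset.sum_map,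
    Finset.sum_product]
  refine Finset.sum_congr rfl fun i _ => ?_
  rw [Matrix.permanent, Finset.mul_sum]
  induction i using Fin.cases with
  | zero =>
    refine Finset.sum_congr rfl fun σ _ => ?_
    simp [Fin.prod_univ_succ, Equiv.Perm.decomposeFin_symm_apply_zero,
      Equiv.Perm.decomposeFin_symm_apply_succ, Matrix.submatrix, Fin.succAbove_zero]
  | succ p =>
    have key : ∀ σ : Perm (Fin n), ∏ i', A (Equiv.Perm.decomposeFin.symm (p.succ, σ) i') i'
        = A p.succ 0 * ∏ i' : Fin n,
            (A.submatrix p.succ.succAbove Fin.succ) ((p.cycleRange * σ) i') i' := by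
      intro σ
      rw [Fin.prod_univ_succ]
      simp [Equiv.Perm.decomposeFin_symm_apply_zero, Equiv.Perm.decomposeFin_symm_apply_succ,
        Fin.succAbove_cycleRange, Matrix.submatrix, Equiv.Perm.mul_apply]
    simp only [Equiv.toEmbedding_apply]
    rw [Finset.sum_congr rfl fun σ _ => key σ]
    exact (Group.mulLeft_bijective p.cycleRange).sum_comp
      (fun τ => A p.succ 0 * ∏ i' : Fin n, (A.submatrix p.succ.succAbove Fin.succ) (τ i') i')

/-- Laplace expansion of the permanent along row 0. -/
lemma permanent_succ_row_zero {n : ℕ} (A : Matrix (Fin n.succ) (Fin n.succ) R) :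
    A.permanent = ∑ j : Fin n.succ, A 0 j *
      (A.submatrix Fin.succ j.succAbove).permanent := by
  rw [← Matrix.permanent_transpose A, permanent_succ_column_zero]
  refine Finset.sum_congr rfl fun j _ => ?_
  rw [← Matrix.permanent_transpose]
  simp [Matrix.transpose_submatrix]


lemma natDegree_det_le {m : Type} [DecidableEq m] [Fintype m]
    (M : Matrix m m R[X]) (b : m → ℕ) (h : ∀ i j, (M i j).natDegree ≤ b i) :
    M.det.natDegree ≤ ∑ i, b i := by
  rw [Matrix.det_apply']
  refine Polynomial.natDegree_sum_le_of_forall_le _ _ fun σ _ => ?_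
  refine Polynomial.natDegree_mul_le.trans ?_
  rw [show ((Equiv.Perm.sign σ : ℤ) : R[X]).natDegree = 0 from Polynomial.natDegree_intCast _,
    zero_add]
  refine (Polynomial.natDegree_prod_le _ _).trans ?_
  calc ∑ i, (M (σ i) i).natDegree ≤ ∑ i, b (σ i) :=
        Finset.sum_le_sum fun i _ => h _ _
    _ = ∑ i, b i := Equiv.sum_comp σ b

lemma natDegree_permanent_le {m : Type} [DecidableEq m] [Fintype m]
    (M : Matrix m m R[X]) (b : m → ℕ) (h : ∀ i j, (M i j).natDegree ≤ b i) :
    M.permanent.natDegree ≤ ∑ i, b i := by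
  rw [Matrix.permanent]
  refine Polynomial.natDegree_sum_le_of_forall_le _ _ fun σ _ => ?_
  refine (Polynomial.natDegree_prod_le _ _).trans ?_
  calc ∑ i, (M (σ i) i).natDegree ≤ ∑ i, b (σ i) :=
        Finset.sum_le_sum fun i _ => h _ _
    _ = ∑ i, b i := Equiv.sum_comp σ b

lemma insert_image_succAbove {n : ℕ} (k : Fin (n + 1)) (c : Fin n) :
    insert k ((Finset.univ.erase c).image k.succAbove) =
      Finset.univ.erase (k.succAbove c) := by
  ext x
  simp only [Finset.mem_insert, Finset.mem_image, Finset.mem_erase, Finset.mem_univ,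
    and_true, true_and]
  constructor
  · rintro (rfl | ⟨m, hm, rfl⟩)
    · exact (Fin.succAbove_ne _ c).symm
    · exact fun hx => hm (Fin.succAbove_right_injective hx)
  · intro hx
    rcases eq_or_ne x k with rfl | hxk
    · exact Or.inl rfl
    · obtain ⟨m, rfl⟩ := Fin.exists_succAbove_eq hxk
      exact Or.inr ⟨m, fun hc => hx (by rw [hc]), rfl⟩

lemma prod_erase_succAbove {n : ℕ} (f : Fin (n + 1) → R) (k : Fin (n + 1)) (c : Fin n) :
    ∏ m ∈ Finset.univ.erase (k.succAbove c), f m =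
      f k * ∏ m ∈ Finset.univ.erase c, f (k.succAbove m) := by
  rw [← insert_image_succAbove, Finset.prod_insert, Finset.prod_image]
  · intro a _ b _ hab; exact Fin.succAbove_right_injective hab
  · simp only [Finset.mem_image, Finset.mem_erase]
    rintro ⟨m, _, hm⟩
    exact Fin.succAbove_ne k m hm


lemma Bm_map {n : ℕ} (f : R →+* S) (z w : Fin n → R) :
    (Bm z w).map f = Bm (f ∘ z) (f ∘ w) := by
  ext j k
  simp only [Matrix.map_apply, Bm, Matrix.of_apply, map_prod f, map_sub, _root_.map_one, _root_.map_mul,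
    Function.comp_apply]

lemma B2_map {n : ℕ} (f : R →+* S) (z w : Fin n → R) :
    (B2 z w).map f = B2 (f ∘ z) (f ∘ w) := by
  ext j k
  simp only [Matrix.map_apply, B2, Matrix.of_apply, map_pow, map_prod f, map_sub, _root_.map_one,
    _root_.map_mul, Function.comp_apply]

section Core

variable {K : Type} [Field K]

lemma core (n : ℕ)
    (IH : ∀ z w : Fin n → K, (Bm z w).det * (Bm z w).permanent = (B2 z w).det)
    (z w : Fin (n + 1) → K) (hz : Function.Injective z) (hw : Function.Injective w)
    (hw0 : ∀ k, w k ≠ 0) (hzw : ∀ j k, z j * w k ≠ 1) :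
    (Bm z w).det * (Bm z w).permanent = (B2 z w).det := by
  classical
  -- polynomials in the variable replacing `z 0`
  set zP : Fin (n + 1) → K[X] := fun j => if j = 0 then X else C (z j) with hzP
  set wP : Fin (n + 1) → K[X] := fun k => C (w k) with hwP
  set f : K[X] := (Bm zP wP).det with hf
  set g : K[X] := (Bm zP wP).permanent with hg
  set h : K[X] := (B2 zP wP).det with hh
  set zt : K → Fin (n + 1) → K := fun t j => if j = 0 then t else z j with hzt
  have hcomp : ∀ t : K, (Polynomial.evalRingHom t) ∘ zP = zt t := by
    intro t; funext j
    by_cases hj : j = 0 <;> simp [hzP, hzt, hj]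
  have hcompw : ∀ t : K, (Polynomial.evalRingHom t) ∘ wP = w := by
    intro t; funext k; simp [hwP]
  have evf : ∀ t : K, f.eval t = (Bm (zt t) w).det := by
    intro t
    have h1 := RingHom.map_det (Polynomial.evalRingHom t) (Bm zP wP)
    have h2 : (Polynomial.evalRingHom t).mapMatrix (Bm zP wP) = Bm (zt t) w := by
      rw [RingHom.mapMatrix_apply, Bm_map, hcomp, hcompw]
    rw [hf, show f.eval t = (Polynomial.evalRingHom t) (Bm zP wP).det from rfl, h1, h2]
  have evg : ∀ t : K, g.eval t = (Bm (zt t) w).permanent := by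
    intro t
    have h2 : (Bm zP wP).map (Polynomial.evalRingHom t) = Bm (zt t) w := by
      rw [Bm_map, hcomp, hcompw]
    rw [hg, show g.eval t = (Polynomial.evalRingHom t) (Bm zP wP).permanent from rfl,
      ← permanent_map, h2]
  have evh : ∀ t : K, h.eval t = (B2 (zt t) w).det := by
    intro t
    have h1 := RingHom.map_det (Polynomial.evalRingHom t) (B2 zP wP)
    have h2 : (Polynomial.evalRingHom t).mapMatrix (B2 zP wP) = B2 (zt t) w := by
      rw [RingHom.mapMatrix_apply, B2_map, hcomp, hcompw]
    rw [hh, show h.eval t = (Polynomial.evalRingHom t) (B2 zP wP).det from rfl, h1, h2]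
  -- degree bounds
  have hentry : ∀ j k, ((Bm zP wP) j k).natDegree ≤ if j = 0 then n else 0 := by
    intro j k
    rw [Bm_apply]
    by_cases hj : j = 0
    · simp only [hj, if_pos rfl]
      refine (Polynomial.natDegree_prod_le _ _).trans ?_
      have : ∀ m ∈ Finset.univ.erase k, (1 - zP 0 * wP m).natDegree ≤ 1 := by
        intro m _
        refine (Polynomial.natDegree_sub_le _ _).trans ?_
        simp only [Polynomial.natDegree_one, hzP, hwP, if_pos rfl]
        refine max_le (Nat.zero_le _) (Polynomial.natDegree_mul_le.trans ?_)
        simp [Polynomial.natDegree_X, Polynomial.natDegree_C]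
      refine (Finset.sum_le_sum this).trans ?_
      simp [Finset.card_erase_of_mem]
    · simp only [hj, if_neg hj]
      have : ∀ m ∈ Finset.univ.erase k, (1 - zP j * wP m).natDegree ≤ 0 := by
        intro m _
        refine (Polynomial.natDegree_sub_le _ _).trans ?_
        simp only [Polynomial.natDegree_one, hzP, hwP, if_neg hj]
        refine max_le (Nat.zero_le _) (Polynomial.natDegree_mul_le.trans ?_)
        simp [Polynomial.natDegree_C]
      exact (Polynomial.natDegree_prod_le _ _).trans
        ((Finset.sum_le_sum this).trans (by simp))
  have hsum1 : (∑ j : Fin (n + 1), if j = 0 then n else 0) = n := by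
    rw [Finset.sum_ite_eq' Finset.univ (0 : Fin (n + 1)) (fun _ => n)]
    simp
  have hsum2 : (∑ j : Fin (n + 1), if j = 0 then 2 * n else 0) = 2 * n := by
    rw [Finset.sum_ite_eq' Finset.univ (0 : Fin (n + 1)) (fun _ => 2 * n)]
    simp
  have hdf : f.natDegree ≤ n := by
    have := natDegree_det_le (Bm zP wP) _ hentry
    rwa [hsum1] at this
  have hdg : g.natDegree ≤ n := by
    have := natDegree_permanent_le (Bm zP wP) _ hentry
    rwa [hsum1] at this
  have hdh : h.natDegree ≤ 2 * n := by
    have key : ∀ j k, ((B2 zP wP) j k).natDegree ≤ if j = 0 then 2 * n else 0 := by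
      intro j k
      have : (B2 zP wP) j k = ((Bm zP wP) j k) ^ 2 := rfl
      rw [this]
      refine (Polynomial.natDegree_pow_le).trans ?_
      have h1 := Nat.mul_le_mul_left 2 (hentry j k)
      refine h1.trans ?_
      split_ifs <;> omega
    have := natDegree_det_le (B2 zP wP) _ key
    rwa [hsum2] at this
  -- interpolation points
  set pts : Finset K := ((Finset.univ.erase 0).image z) ∪
    (Finset.univ.image fun k => (w k)⁻¹) with hpts
  have hzwinv : ∀ j k, z j ≠ (w k)⁻¹ := by
    intro j k hcon
    exact hzw j k (by rw [hcon]; exact inv_mul_cancel₀ (hw0 k))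
  have hcard : pts.card = 2 * n + 1 := by
    rw [hpts, Finset.card_union_of_disjoint, Finset.card_image_of_injective _ hz,
      Finset.card_image_of_injective _ (fun a b hab => hw (by
        rw [← inv_inv (w a), hab, inv_inv]))]
    · simp [Finset.card_erase_of_mem]; ring
    · rw [Finset.disjoint_left]
      rintro x hx1 hx2
      simp only [Finset.mem_image, Finset.mem_erase, Finset.mem_univ, and_true,
        true_and] at hx1 hx2
      obtain ⟨j, _, rfl⟩ := hx1
      obtain ⟨k, hk⟩ := hx2
      exact hzwinv j k hk.symm
  -- the difference vanishes on pts
  have hvanish : ∀ x ∈ pts, (f * g - h).eval x = 0 := by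
    intro x hx
    rw [Polynomial.eval_sub, Polynomial.eval_mul, evf, evg, evh]
    rw [hpts, Finset.mem_union] at hx
    rcases hx with hx | hx
    · -- x = z j with j ≠ 0 : two equal rows
      simp only [Finset.mem_image, Finset.mem_erase, Finset.mem_univ, and_true, true_and] at hx
      obtain ⟨j, hj0, rfl⟩ := hx
      have hz0 : zt (z j) 0 = z j := by simp [hzt]
      have hzj : zt (z j) j = z j := by by_cases hj : j = 0 <;> simp [hzt, hj]
      have hrow : (Bm (zt (z j)) w) 0 = (Bm (zt (z j)) w) j := by
        funext c
        simp only [Bm, Matrix.of_apply]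
        exact Finset.prod_congr rfl fun m _ => by rw [hz0, hzj]
      have hrow2 : (B2 (zt (z j)) w) 0 = (B2 (zt (z j)) w) j := by
        funext c
        simp only [B2, Matrix.of_apply]
        have := congrFun hrow c
        simp only [Bm, Matrix.of_apply] at this
        rw [this]
      rw [Matrix.det_zero_of_row_eq (Ne.symm hj0) hrow,
        Matrix.det_zero_of_row_eq (Ne.symm hj0) hrow2]
      ring
    · -- x = (w k)⁻¹ : Laplace expansion and induction hypothesis
      simp only [Finset.mem_image, Finset.mem_univ, true_and] at hx
      obtain ⟨k, rfl⟩ := hx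
      set v : Fin (n + 1) → K := zt (w k)⁻¹ with hv
      have hv0 : v 0 = (w k)⁻¹ := by simp [hv, hzt]
      have hvs : ∀ j : Fin n, v j.succ = z j.succ := fun j => by
        simp [hv, hzt, Fin.succ_ne_zero j]
      set N : Matrix (Fin (n + 1)) (Fin (n + 1)) K := Bm v w with hN
      set d : Fin n → K := fun j => 1 - z j.succ * w k with hd
      set z' : Fin n → K := fun j => z j.succ with hz'
      set w' : Fin n → K := fun c => w (k.succAbove c) with hw'
      have hN0 : ∀ c, c ≠ k → N 0 c = 0 := by
        intro c hc
        rw [show N 0 c = ∏ m ∈ Finset.univ.erase c, (1 - v 0 * w m) from rfl]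
        refine Finset.prod_eq_zero
          (Finset.mem_erase.mpr ⟨Ne.symm hc, Finset.mem_univ k⟩) ?_
        rw [hv0, inv_mul_cancel₀ (hw0 k), sub_self]
      have hminor : N.submatrix Fin.succ k.succAbove =
          Matrix.of (fun j c => d j * (Bm z' w') j c) := by
        ext j c
        rw [Matrix.submatrix_apply,
          show N j.succ (k.succAbove c) =
            ∏ m ∈ Finset.univ.erase (k.succAbove c), (1 - v j.succ * w m) from rfl]
        have : ∀ m, 1 - v j.succ * w m = 1 - z j.succ * w m := fun m => by rw [hvs]
        rw [Finset.prod_congr rfl fun m _ => this m,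
          prod_erase_succAbove (fun m => 1 - z j.succ * w m) k c]
        rfl
      have hminor2 : (B2 v w).submatrix Fin.succ k.succAbove =
          Matrix.of (fun j c => (d j) ^ 2 * (B2 z' w') j c) := by
        ext j c
        have h1 : (B2 v w).submatrix Fin.succ k.succAbove j c =
            (N.submatrix Fin.succ k.succAbove j c) ^ 2 := rfl
        rw [h1, hminor]
        simp only [Matrix.of_apply, mul_pow]
        rfl
      have hdetN : N.det = (-1) ^ (k : ℕ) * N 0 k * ((∏ j, d j) * (Bm z' w').det) := by
        rw [Matrix.det_succ_row_zero]
        rw [Finset.sum_eq_single k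
          (fun c _ hck => by rw [hN0 c hck, mul_zero, zero_mul])
          (fun hk => absurd (Finset.mem_univ k) hk)]
        rw [hminor, Matrix.det_mul_column, mul_assoc]
      have hperN : N.permanent = N 0 k * ((∏ j, d j) * (Bm z' w').permanent) := by
        rw [permanent_succ_row_zero]
        rw [Finset.sum_eq_single k
          (fun c _ hck => by rw [hN0 c hck, zero_mul])
          (fun hk => absurd (Finset.mem_univ k) hk)]
        rw [hminor, permanent_mul_row]
      have hdet2 : (B2 v w).det =
          (-1) ^ (k : ℕ) * (N 0 k) ^ 2 * ((∏ j, d j) ^ 2 * (B2 z' w').det) := by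
        have hB20 : ∀ c, (B2 v w) 0 c = (N 0 c) ^ 2 := fun c => rfl
        rw [Matrix.det_succ_row_zero]
        rw [Finset.sum_eq_single k
          (fun c _ hck => by
            rw [hB20 c, hN0 c hck]
            ring)
          (fun hk => absurd (Finset.mem_univ k) hk)]
        rw [hB20, hminor2,
          show (Matrix.of (fun j c => (d j) ^ 2 * (B2 z' w') j c)).det =
            (∏ j, (d j) ^ 2) * (B2 z' w').det from Matrix.det_mul_column _ _,
          Finset.prod_pow]
      rw [hdetN, hperN, hdet2, ← IH z' w']
      ring
  have hfg : f * g = h := by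
    have : f * g - h = 0 := by
      refine Polynomial.eq_zero_of_natDegree_lt_card_of_eval_eq_zero' _ pts hvanish ?_
      rw [hcard]
      refine lt_of_le_of_lt (Polynomial.natDegree_sub_le _ _) ?_
      refine Nat.lt_succ_of_le (max_le ?_ hdh)
      exact Polynomial.natDegree_mul_le.trans (by omega)
    exact sub_eq_zero.mp this
  -- evaluate at z 0
  have hzt0 : zt (z 0) = z := by
    funext j
    by_cases hj : j = 0 <;> simp [hzt, hj]
  have := congrArg (Polynomial.eval (z 0)) hfg
  rw [Polynomial.eval_mul, evf, evg, evh, hzt0] at this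
  exact this

end Core


/-- Borchardt's identity as a universal polynomial identity. -/
theorem borchardt_univ (n : ℕ) : ∀ (R : Type) [CommRing R] (z w : Fin n → R),
    (Bm z w).det * (Bm z w).permanent = (B2 z w).det := by
  induction n with
  | zero =>
    intro R _ z w
    simp [Matrix.det_isEmpty, Matrix.permanent_isEmpty]
  | succ n IH =>
    intro R _ z w
    set S := MvPolynomial (Fin (n + 1) ⊕ Fin (n + 1)) ℤ with hS
    set K := FractionRing S with hK
    set ZS : Fin (n + 1) → S := fun i => MvPolynomial.X (Sum.inl i) with hZS
    set WS : Fin (n + 1) → S := fun i => MvPolynomial.X (Sum.inr i) with hWS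
    set φK : S →+* K := algebraMap S K with hφK
    have hinj : Function.Injective φK := IsFractionRing.injective S K
    have hXinj : Function.Injective (MvPolynomial.X :
        (Fin (n + 1) ⊕ Fin (n + 1)) → S) := MvPolynomial.X_injective
    -- generic identity over K
    have hgen : (Bm (φK ∘ ZS) (φK ∘ WS)).det * (Bm (φK ∘ ZS) (φK ∘ WS)).permanent =
        (B2 (φK ∘ ZS) (φK ∘ WS)).det := by
      refine core n (fun z' w' => IH K z' w') _ _ ?_ ?_ ?_ ?_
      · intro i j hij
        exact Sum.inl_injective (hXinj (hinj hij))
      · intro i j hij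
        exact Sum.inr_injective (hXinj (hinj hij))
      · intro k hk
        have hk' : φK (WS k) = φK 0 := by
          rw [map_zero]; exact hk
        exact MvPolynomial.X_ne_zero (Sum.inr k) (hinj hk')
      · intro j k hjk
        have : (MvPolynomial.X (Sum.inl j) * MvPolynomial.X (Sum.inr k) : S) = 1 := by
          apply hinj
          rw [_root_.map_mul, _root_.map_one]
          exact hjk
        have h0 := congrArg MvPolynomial.constantCoeff this
        simp [MvPolynomial.constantCoeff_X] at h0
    -- pull back to S
    have hSid : (Bm ZS WS).det * (Bm ZS WS).permanent = (B2 ZS WS).det := by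
      apply hinj
      rw [_root_.map_mul, RingHom.map_det, RingHom.map_det, ← permanent_map φK,
        RingHom.mapMatrix_apply, RingHom.mapMatrix_apply, Bm_map, B2_map]
      exact hgen
    -- specialize to R
    set φ : S →+* R := (MvPolynomial.eval₂Hom (Int.castRingHom R) (Sum.elim z w)) with hφ
    have hmz : φ ∘ ZS = z := funext fun i =>
      MvPolynomial.eval₂Hom_X' (Int.castRingHom R) (Sum.elim z w) (Sum.inl i)
    have hmw : φ ∘ WS = w := funext fun i =>
      MvPolynomial.eval₂Hom_X' (Int.castRingHom R) (Sum.elim z w) (Sum.inr i)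
    have := congrArg φ hSid
    rw [_root_.map_mul, RingHom.map_det, RingHom.map_det, ← permanent_map φ,
      RingHom.mapMatrix_apply, RingHom.mapMatrix_apply, Bm_map, B2_map, hmz, hmw] at this
    exact this


section FieldConv

variable {F : Type} [Field F]

lemma prod_row_key {n : ℕ} (z w : Fin n → F) (hu : ∀ j k, (1 - z j * w k) ≠ 0)
    (σ : Equiv.Perm (Fin n)) :
    ∏ i, Bm z w (σ i) i =
      (∏ i, (1 - z (σ i) * w i)⁻¹) * ∏ j, ∏ k, (1 - z j * w k) := by
  have h1 : ∀ i : Fin n, Bm z w (σ i) i =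
      (1 - z (σ i) * w i)⁻¹ * ∏ m, (1 - z (σ i) * w m) := by
    intro i
    rw [Bm_apply, ← Finset.mul_prod_erase Finset.univ
      (fun m => 1 - z (σ i) * w m) (Finset.mem_univ i),
      inv_mul_cancel_left₀ (hu _ _)]
  rw [Finset.prod_congr rfl (fun i _ => h1 i), Finset.prod_mul_distrib]
  congr 1
  exact Equiv.prod_comp σ (fun j => ∏ m, (1 - z j * w m))

lemma det_Bm_eq {n : ℕ} (z w : Fin n → F) (hu : ∀ j k, (1 - z j * w k) ≠ 0) :
    (Bm z w).det = (Matrix.of fun j k : Fin n => (1 - z j * w k)⁻¹).det *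
      ∏ j, ∏ k, (1 - z j * w k) := by
  rw [Matrix.det_apply, Matrix.det_apply, Finset.sum_mul]
  refine Finset.sum_congr rfl fun σ _ => ?_
  rw [smul_mul_assoc]
  congr 1
  exact prod_row_key z w hu σ

lemma permanent_Bm_eq {n : ℕ} (z w : Fin n → F) (hu : ∀ j k, (1 - z j * w k) ≠ 0) :
    (Bm z w).permanent = (Matrix.of fun j k : Fin n => (1 - z j * w k)⁻¹).permanent *
      ∏ j, ∏ k, (1 - z j * w k) := by
  rw [Matrix.permanent, Matrix.permanent, Finset.sum_mul]
  refine Finset.sum_congr rfl fun σ _ => ?_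
  exact prod_row_key z w hu σ

lemma det_B2_eq {n : ℕ} (z w : Fin n → F) (hu : ∀ j k, (1 - z j * w k) ≠ 0) :
    (B2 z w).det = (Matrix.of fun j k : Fin n => ((1 - z j * w k) ^ 2)⁻¹).det *
      (∏ j, ∏ k, (1 - z j * w k)) ^ 2 := by
  rw [Matrix.det_apply, Matrix.det_apply, Finset.sum_mul]
  refine Finset.sum_congr rfl fun σ _ => ?_
  rw [smul_mul_assoc]
  congr 1
  have h1 : ∏ i, B2 z w (σ i) i = (∏ i, Bm z w (σ i) i) ^ 2 := by
    rw [← Finset.prod_pow]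
    rfl
  rw [h1, prod_row_key z w hu σ, mul_pow]
  congr 1
  rw [← Finset.prod_pow]
  refine Finset.prod_congr rfl fun i _ => ?_
  rw [Matrix.of_apply, inv_pow]

end FieldConv

end Borch

/-- Borchardt's identity applied to points of the unit disk: with
`A_{jk} = (1 - z_j conj(z_k))⁻¹` and `M_{jk} = (1 - z_j conj(z_k))⁻²`,
one has `perm(A) · det(A) = det(M)`. -/
theorem borchardt_unit_disk (n : ℕ) (z : Fin n → ℂ) (hz : ∀ i, ‖z i‖ < 1) :
    (Matrix.of fun j k : Fin n => (1 - z j * (starRingEnd ℂ) (z k))⁻¹).permanent *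
      (Matrix.of fun j k : Fin n => (1 - z j * (starRingEnd ℂ) (z k))⁻¹).det =
    (Matrix.of fun j k : Fin n => ((1 - z j * (starRingEnd ℂ) (z k)) ^ 2)⁻¹).det := by
  set w : Fin n → ℂ := fun k => (starRingEnd ℂ) (z k) with hw
  have hu : ∀ j k, (1 - z j * w k) ≠ 0 := by
    intro j k h
    have h1 : z j * w k = 1 := by linear_combination -h
    have h2 := congrArg (norm : ℂ → ℝ) h1
    rw [norm_mul, norm_one] at h2
    have h3 : ‖w k‖ = ‖z k‖ := Complex.norm_conj (z k)
    rw [h3] at h2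
    nlinarith [hz j, hz k, norm_nonneg (z j),
      norm_nonneg (z k)]
  have hP : (∏ j, ∏ k, (1 - z j * w k)) ≠ 0 :=
    Finset.prod_ne_zero_iff.mpr fun j _ => Finset.prod_ne_zero_iff.mpr fun k _ => hu j k
  have huniv := Borch.borchardt_univ n ℂ z w
  rw [Borch.det_Bm_eq z w hu, Borch.permanent_Bm_eq z w hu, Borch.det_B2_eq z w hu] at huniv
  apply mul_right_cancel₀ (pow_ne_zero 2 hP)
  linear_combination huniv
end

section
/- Let ρ > 0 and fix r ∈ (0,1). There exist constants c > 0 and γ > 0 such that for every x > 0, P({a : sup_{|z| ≤ r} |f_{a,ρ}(z)| > x}) ≤ c·e^{−γx²}. -/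
open MeasureTheory Complex Filter Metric Set

/-- `P` is the law of an i.i.d. sequence of standard complex Gaussian coefficients:
a probability measure on `ℕ → ℂ` whose finite-dimensional cylinder marginals are
the corresponding products of `gaussianC`. -/
def IsGaussianSeqMeasure (P : Measure (ℕ → ℂ)) : Prop :=
  IsProbabilityMeasure P ∧
    ∀ s : ℕ → Set ℂ, (∀ n, MeasurableSet (s n)) →
      ∀ t : Finset ℕ, P {a | ∀ n ∈ t, a n ∈ s n} = ∏ n ∈ t, gaussianC (s n)

/-- `c_n(ρ) = ρ(ρ+1)⋯(ρ+n−1)/n!` (with `c_0(ρ) = 1`). -/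
noncomputable def cRho (ρ : ℝ) (n : ℕ) : ℝ :=
  (∏ i ∈ Finset.range n, (ρ + i)) / (n.factorial : ℝ)

/-- The random power series `f_{a,ρ}(z) = ∑ c_n(ρ)^{1/2} a_n z^n`. -/
noncomputable def fRho (ρ : ℝ) (a : ℕ → ℂ) (z : ℂ) : ℂ :=
  ∑' n : ℕ, (Real.sqrt (cRho ρ n) : ℂ) * a n * z ^ n

lemma aux_P_single (P : Measure (ℕ → ℂ)) (hP : IsGaussianSeqMeasure P) (n : ℕ)
    (s : Set ℂ) (hs : MeasurableSet s) : P {a | a n ∈ s} = gaussianC s := by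
  have h := hP.2 (fun _ => s) (fun _ => hs) {n}
  simpa using h

lemma aux_cRho_pos {ρ : ℝ} (hρ : 0 < ρ) (n : ℕ) : 0 < cRho ρ n := by
  apply div_pos
  · exact Finset.prod_pos fun i _ => by positivity
  · exact_mod_cast n.factorial_pos

lemma aux_cRho_succ {ρ : ℝ} (n : ℕ) :
    cRho ρ (n + 1) = cRho ρ n * ((ρ + n) / (n + 1)) := by
  unfold cRho
  rw [Finset.prod_range_succ, Nat.factorial_succ]
  have h1 : (n.factorial : ℝ) ≠ 0 := by exact_mod_cast n.factorial_ne_zero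
  have h2 : ((n : ℝ) + 1) ≠ 0 := by positivity
  push_cast
  rw [div_mul_div_comm, mul_comm ((n:ℝ) + 1)]

lemma aux_summable {ρ : ℝ} (hρ : 0 < ρ) {r' : ℝ} (h0 : 0 < r') (h1 : r' < 1) :
    Summable (fun n => Real.sqrt (cRho ρ n) * r' ^ n) := by
  set r'' : ℝ := (1 + r') / 2 with hr''
  have hr'r'' : r' < r'' := by rw [hr'']; linarith
  have hr''1 : r'' < 1 := by rw [hr'']; linarith
  have hr''0 : 0 < r'' := by rw [hr'']; linarith
  have hβ : 1 < (r'' / r') ^ 2 := by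
    have : 1 < r'' / r' := (one_lt_div h0).2 hr'r''
    nlinarith
  set δ : ℝ := (r'' / r') ^ 2 - 1 with hδ
  have hδ0 : 0 < δ := by rw [hδ]; linarith
  apply summable_of_ratio_norm_eventually_le hr''1
  filter_upwards [eventually_ge_atTop ⌈ρ / δ⌉₊] with n hn
  have hcn := aux_cRho_pos hρ n
  have hratio : (ρ + n) / (n + 1) ≤ (r'' / r') ^ 2 := by
    have hle : ρ / δ ≤ (n : ℝ) := le_trans (Nat.le_ceil _) (by exact_mod_cast hn)
    have : ρ ≤ n * δ := by
      rw [div_le_iff₀ hδ0] at hle; linarith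
    have hβδ : (r'' / r') ^ 2 = 1 + δ := by rw [hδ]; ring
    rw [div_le_iff₀ (by positivity : (0:ℝ) < (n:ℝ) + 1), hβδ]
    nlinarith
  have hsq : Real.sqrt ((ρ + n) / (n + 1)) ≤ r'' / r' := by
    rw [show r'' / r' = Real.sqrt ((r'' / r') ^ 2) by
      rw [Real.sqrt_sq (by positivity)]]
    exact Real.sqrt_le_sqrt hratio
  rw [aux_cRho_succ, Real.sqrt_mul hcn.le]
  have hs0 : 0 ≤ Real.sqrt (cRho ρ n) := Real.sqrt_nonneg _
  rw [Real.norm_eq_abs, Real.norm_eq_abs,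
    _root_.abs_of_nonneg (mul_nonneg (mul_nonneg hs0 (Real.sqrt_nonneg _)) (by positivity)),
    _root_.abs_of_nonneg (mul_nonneg hs0 (by positivity))]
  calc Real.sqrt (cRho ρ n) * Real.sqrt ((ρ + n) / (n + 1)) * r' ^ (n + 1)
      ≤ Real.sqrt (cRho ρ n) * (r'' / r') * r' ^ (n + 1) := by
        gcongr
    _ = r'' * (Real.sqrt (cRho ρ n) * r' ^ n) := by
        rw [pow_succ]; field_simp

lemma integrable_half : Integrable (fun z : ℂ => Real.exp (-(1/2 : ℝ) * ‖z‖^2)) := by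
  have h := (GaussianFourier.integrable_cexp_neg_mul_sq_norm_add (V := ℂ) (b := (1/2 : ℂ)) (by norm_num) 0 0).norm
  convert h using 2 with z
  simp [Complex.norm_exp]
  norm_cast

lemma lint_half : ∫⁻ z : ℂ, ENNReal.ofReal (Real.exp (-(1/2 : ℝ) * ‖z‖^2)) = ENNReal.ofReal (2 * Real.pi) := by
  rw [← ofReal_integral_eq_lintegral_ofReal integrable_half (Eventually.of_forall fun z => (Real.exp_pos _).le)]
  rw [GaussianFourier.integral_rexp_neg_mul_sq_norm (by norm_num : (0:ℝ) < 1/2)]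
  rw [Complex.finrank_real_complex]
  norm_num
  rw [div_div_eq_mul_div, div_one, mul_comm]
  rw [ENNReal.ofReal_mul (by norm_num)]
  norm_num

lemma gaussianC_tail {t : ℝ} (ht : 0 ≤ t) :
    gaussianC {w : ℂ | t < ‖w‖} ≤ ENNReal.ofReal (2 * Real.exp (-t^2/2)) := by
  have hmeas : MeasurableSet {w : ℂ | t < ‖w‖} :=
    (isOpen_lt continuous_const continuous_norm).measurableSet
  rw [gaussianC, withDensity_apply _ hmeas]
  have hg : Measurable fun z : ℂ =>
      ENNReal.ofReal (Real.exp (-t^2/2) / Real.pi * Real.exp (-(1/2 : ℝ) * ‖z‖^2)) := by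
    fun_prop
  calc ∫⁻ z in {w : ℂ | t < ‖w‖}, ENNReal.ofReal (Real.exp (-(‖z‖) ^ 2) / Real.pi)
      ≤ ∫⁻ z in {w : ℂ | t < ‖w‖},
          ENNReal.ofReal (Real.exp (-t^2/2) / Real.pi * Real.exp (-(1/2 : ℝ) * ‖z‖^2)) := by
        apply setLIntegral_mono hg
        intro z hz
        apply ENNReal.ofReal_le_ofReal
        rw [div_mul_eq_mul_div]
        gcongr
        rw [← Real.exp_add]
        apply Real.exp_le_exp.2
        have h1 : t ^ 2 ≤ ‖z‖ ^ 2 := pow_le_pow_left₀ ht (le_of_lt hz) 2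
        nlinarith
      _ ≤ ∫⁻ z : ℂ, ENNReal.ofReal (Real.exp (-t^2/2) / Real.pi * Real.exp (-(1/2 : ℝ) * ‖z‖^2)) :=
        setLIntegral_le_lintegral _ _
      _ = ENNReal.ofReal (2 * Real.exp (-t^2/2)) := by
        have : ∀ z : ℂ, ENNReal.ofReal (Real.exp (-t^2/2) / Real.pi * Real.exp (-(1/2 : ℝ) * ‖z‖^2))
            = ENNReal.ofReal (Real.exp (-t^2/2) / Real.pi) * ENNReal.ofReal (Real.exp (-(1/2 : ℝ) * ‖z‖^2)) := by
          intro z; rw [ENNReal.ofReal_mul (by positivity)]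
        simp_rw [this]
        rw [lintegral_const_mul _ (by fun_prop)]
        rw [lint_half, ← ENNReal.ofReal_mul (by positivity)]
        congr 1
        field_simp

set_option maxHeartbeats 1000000 in
/-- Lemma 6.2 (maximum modulus tail bound): for fixed `r < 1` there are `c, γ > 0` with
`P(max_{|z| ≤ r} |f_{a,ρ}(z)| > x) ≤ c e^{-γx²}` for all `x > 0`. -/
theorem max_modulus_tail (P : Measure (ℕ → ℂ)) (hP : IsGaussianSeqMeasure P)
    (ρ : ℝ) (hρ : 0 < ρ) (r : ℝ) (hr : r ∈ Set.Ioo (0 : ℝ) 1) :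
    ∃ c : ℝ, 0 < c ∧ ∃ γ : ℝ, 0 < γ ∧
      ∀ x : ℝ, 0 < x →
        P {a | ∃ z : ℂ, ‖z‖ ≤ r ∧ x < ‖fRho ρ a z‖} ≤
          ENNReal.ofReal (c * Real.exp (-γ * x ^ 2)) := by
  obtain ⟨hr0, hr1⟩ := hr
  haveI hPP : IsProbabilityMeasure P := hP.1
  set r' : ℝ := (1 + r) / 2 with hr'def
  have hrr' : r < r' := by rw [hr'def]; linarith
  have hr'1 : r' < 1 := by rw [hr'def]; linarith
  have hr'0 : 0 < r' := by rw [hr'def]; linarith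
  have hsum : Summable (fun n => Real.sqrt (cRho ρ n) * r' ^ n) := aux_summable hρ hr'0 hr'1
  obtain ⟨S, hSdef⟩ : ∃ S : ℝ, S = ∑' n, Real.sqrt (cRho ρ n) * r' ^ n := ⟨_, rfl⟩
  have htermnn : ∀ n, 0 ≤ Real.sqrt (cRho ρ n) * r' ^ n := fun n => by positivity
  have hS1 : 1 ≤ S := by
    have h0 : Real.sqrt (cRho ρ 0) * r' ^ 0 = 1 := by simp [cRho]
    calc (1:ℝ) = Real.sqrt (cRho ρ 0) * r' ^ 0 := h0.symm
      _ ≤ S := by rw [hSdef]; exact Summable.le_tsum hsum 0 fun n _ => htermnn n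
  have hSpos : 0 < S := lt_of_lt_of_le one_pos hS1
  obtain ⟨β, hβdef⟩ : ∃ β : ℝ, β = (r' / r) ^ 2 := ⟨_, rfl⟩
  have hβ1 : 1 < β := by
    have h : 1 < r' / r := (one_lt_div hr0).2 hrr'
    rw [hβdef]; nlinarith
  obtain ⟨γ, hγdef⟩ : ∃ γ : ℝ, γ = 1 / (2 * S ^ 2) := ⟨_, rfl⟩
  have hγ0 : 0 < γ := by rw [hγdef]; positivity
  obtain ⟨q, hqdef⟩ : ∃ q : ℝ, q = Real.exp (-(β - 1)) := ⟨_, rfl⟩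
  have hq0 : 0 < q := by rw [hqdef]; exact Real.exp_pos _
  have hq1 : q < 1 := by
    rw [hqdef]; exact Real.exp_lt_one_iff.2 (by linarith)
  obtain ⟨c, hcdef⟩ : ∃ c : ℝ, c = Real.exp 1 + 2 * (1 - q)⁻¹ := ⟨_, rfl⟩
  have hq1' : 0 < 1 - q := by linarith
  have hc0 : 0 < c := by
    have h2 : 0 < (1 - q)⁻¹ := inv_pos.2 hq1'
    rw [hcdef]; nlinarith [Real.exp_pos (1:ℝ)]
  refine ⟨c, hc0, γ, hγ0, ?_⟩
  intro x hx
  -- thresholds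
  obtain ⟨t, htdef⟩ : ∃ t : ℕ → ℝ, t = fun n => x * (r' / r) ^ n / S := ⟨_, rfl⟩
  have ht0 : ∀ n, 0 ≤ t n := fun n => by rw [htdef]; positivity
  -- inclusion into the union of coordinate tail events
  have hincl : {a : ℕ → ℂ | ∃ z : ℂ, ‖z‖ ≤ r ∧ x < ‖fRho ρ a z‖}
      ⊆ ⋃ n, {a : ℕ → ℂ | a n ∈ {w : ℂ | t n < ‖w‖}} := by
    intro a ha
    by_contra hnot
    simp only [mem_iUnion, mem_setOf_eq, not_exists, not_lt] at hnot
    obtain ⟨z, hz, hxz⟩ := ha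
    have hnorm : ∀ n, ‖(Real.sqrt (cRho ρ n) : ℂ) * a n * z ^ n‖
        ≤ (x / S) * (Real.sqrt (cRho ρ n) * r' ^ n) := by
      intro n
      have he : ‖(Real.sqrt (cRho ρ n) : ℂ) * a n * z ^ n‖
          = Real.sqrt (cRho ρ n) * ‖a n‖ * ‖z‖ ^ n := by
        simp [map_mul, map_pow,
          _root_.abs_of_nonneg (Real.sqrt_nonneg _)]
      rw [he]
      calc Real.sqrt (cRho ρ n) * ‖a n‖ * ‖z‖ ^ n
          ≤ Real.sqrt (cRho ρ n) * (x * (r' / r) ^ n / S) * r ^ n := by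
            have h1 : ‖a n‖ ≤ x * (r' / r) ^ n / S := by
              have := hnot n; rwa [htdef] at this
            have h2 : ‖z‖ ^ n ≤ r ^ n :=
              pow_le_pow_left₀ (norm_nonneg _) hz n
            have h3 : (0:ℝ) ≤ ‖a n‖ := norm_nonneg _
            have h4 : (0:ℝ) ≤ Real.sqrt (cRho ρ n) := Real.sqrt_nonneg _
            gcongr
        _ = (x / S) * (Real.sqrt (cRho ρ n) * r' ^ n) := by
            rw [div_pow]
            field_simp
    have hsumnorm : Summable (fun n => ‖(Real.sqrt (cRho ρ n) : ℂ) * a n * z ^ n‖) :=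
      Summable.of_nonneg_of_le (fun n => norm_nonneg _) hnorm (hsum.mul_left (x / S))
    have hsumf : Summable (fun n => (Real.sqrt (cRho ρ n) : ℂ) * a n * z ^ n) :=
      hsumnorm.of_norm
    have hle : ‖fRho ρ a z‖ ≤ x := by
      rw [fRho]
      calc ‖∑' n, (Real.sqrt (cRho ρ n) : ℂ) * a n * z ^ n‖
          ≤ ∑' n, ‖(Real.sqrt (cRho ρ n) : ℂ) * a n * z ^ n‖ := norm_tsum_le_tsum_norm hsumnorm
        _ ≤ ∑' n, (x / S) * (Real.sqrt (cRho ρ n) * r' ^ n) :=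
            Summable.tsum_le_tsum hnorm hsumnorm (hsum.mul_left (x / S))
        _ = (x / S) * S := by rw [tsum_mul_left, ← hSdef]
        _ = x := div_mul_cancel₀ x hSpos.ne'
    exact absurd hxz (not_lt.2 hle)
  -- measure bound for each coordinate event
  have hmeasn : ∀ n, P {a : ℕ → ℂ | a n ∈ {w : ℂ | t n < ‖w‖}}
      ≤ ENNReal.ofReal (2 * Real.exp (-(t n) ^ 2 / 2)) := by
    intro n
    rw [aux_P_single P hP n _ (isOpen_lt continuous_const continuous_norm).measurableSet]
    exact gaussianC_tail (ht0 n)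
  -- exponent identity
  have hexp : ∀ n : ℕ, -t n ^ 2 / 2 = -(γ * β ^ n * x ^ 2) := by
    intro n
    rw [htdef, hγdef, hβdef]
    simp only [← pow_mul, mul_comm 2]
    rw [pow_mul]
    field_simp
  by_cases hcase : γ * x ^ 2 < 1
  · -- trivial bound
    have h1 : P {a | ∃ z : ℂ, ‖z‖ ≤ r ∧ x < ‖fRho ρ a z‖} ≤ 1 :=
      prob_le_one
    refine h1.trans ?_
    rw [ENNReal.one_le_ofReal]
    have he1 : Real.exp (-1) ≤ Real.exp (-γ * x ^ 2) := by
      apply Real.exp_le_exp.2; nlinarith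
    have he2 : Real.exp 1 * Real.exp (-1) = 1 := by
      rw [← Real.exp_add]; norm_num
    have h2q : 0 < 2 * (1 - q)⁻¹ := by nlinarith [inv_pos.2 hq1']
    have hee : 0 < Real.exp (-γ * x ^ 2) := Real.exp_pos _
    rw [hcdef]
    nlinarith [Real.exp_pos (1:ℝ)]
  · push_neg at hcase
    calc P {a | ∃ z : ℂ, ‖z‖ ≤ r ∧ x < ‖fRho ρ a z‖}
        ≤ P (⋃ n, {a : ℕ → ℂ | a n ∈ {w : ℂ | t n < ‖w‖}}) := measure_mono hincl
      _ ≤ ∑' n, P {a : ℕ → ℂ | a n ∈ {w : ℂ | t n < ‖w‖}} := measure_iUnion_le _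
      _ ≤ ∑' n, ENNReal.ofReal (2 * Real.exp (-γ * x ^ 2) * q ^ n) := by
          apply ENNReal.tsum_le_tsum
          intro n
          refine (hmeasn n).trans (ENNReal.ofReal_le_ofReal ?_)
          rw [hexp n]
          have hber : 1 + (n : ℝ) * (β - 1) ≤ β ^ n := by
            have := one_add_mul_le_pow (a := β - 1) (by linarith) n
            simpa using this
          have hnb : (0:ℝ) ≤ (n : ℝ) * (β - 1) :=
            mul_nonneg (Nat.cast_nonneg n) (by linarith)
          have hβn1 : (1:ℝ) ≤ β ^ n := by linarith
          calc 2 * Real.exp (-(γ * β ^ n * x ^ 2))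
              ≤ 2 * (Real.exp (-γ * x ^ 2) * Real.exp ((n : ℝ) * -(β - 1))) := by
                rw [← Real.exp_add]
                exact mul_le_mul_of_nonneg_left
                  (Real.exp_le_exp.2 (by nlinarith [mul_nonneg (sub_nonneg.2 hcase) (sub_nonneg.2 hβn1), hber])) (by norm_num)
            _ = 2 * Real.exp (-γ * x ^ 2) * q ^ n := by
                rw [hqdef, ← Real.exp_nat_mul]; ring
      _ ≤ ENNReal.ofReal (c * Real.exp (-γ * x ^ 2)) := by
          have hsg : Summable (fun n : ℕ => 2 * Real.exp (-γ * x ^ 2) * q ^ n) :=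
            (summable_geometric_of_lt_one hq0.le hq1).mul_left _
          have heq := ENNReal.ofReal_tsum_of_nonneg
            (f := fun n : ℕ => 2 * Real.exp (-γ * x ^ 2) * q ^ n)
            (fun n => mul_nonneg (by positivity) (pow_nonneg hq0.le n)) hsg
          rw [← heq]
          apply ENNReal.ofReal_le_ofReal
          rw [tsum_mul_left, tsum_geometric_of_lt_one hq0.le hq1]
          have hiq : 0 < (1 - q)⁻¹ := inv_pos.2 hq1'
          have hee : 0 < Real.exp (-γ * x ^ 2) := Real.exp_pos _
          rw [hcdef]
          nlinarith [Real.exp_pos (1:ℝ)]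
end
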